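/- arXiv:2009.05878 — 3 statements merged into one kernel-verified Lean document; each statement's English description precedes it below -/
import Mathlib

section
/- Two-variable 2×2 determinant identity (Proposition 1.7): for all x, q ∈ ℂ with |q| < 1, one has (∑_{n≥0} q^{n(n+1)}/(q;q)_{2n} · x^{2n}) · (∑_{n≥0} q^{n²}/(q;q)_{2n} · x^{2n}) − (∑_{n≥0} q^{(n+1)²}/(q;q)_{2n+1} · x^{2n+1}) · (∑_{n≥0} q^{n(n+1)}/(q;q)_{2n+1} · x^{2n+1}) = 1; that is, the 2×2 matrix with rows (∑_{n≥0} q^{n(n+1)}/(q;q)_{2n} x^{2n}, ∑_{n≥0} q^{(n+1)²}/(q;q)_{2n+1} x^{2n+1}) and (∑_{n≥0} q^{n(n+1)}/(q;q)_{2n+1} x^{2n+1}, ∑_{n≥0} q^{n²}/(q;q)_{2n} x^{2n}) has determinant 1. -/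
open scoped BigOperators

noncomputable section

/-- `(a; q)_n := ∏_{k=0}^{n-1} (1 - q^k a)`. -/
def qPochFin (q a : ℂ) (n : ℕ) : ℂ := ∏ k ∈ Finset.range n, (1 - q ^ k * a)

lemma qPochFin_zero (q : ℂ) : qPochFin q q 0 = 1 := by simp [qPochFin]

lemma qPochFin_succ (q : ℂ) (n : ℕ) :
    qPochFin q q (n + 1) = qPochFin q q n * (1 - q ^ (n + 1)) := by
  rw [qPochFin, Finset.prod_range_succ, ← pow_succ]; rfl

lemma qPochFin_ne_zero {q : ℂ} (hq : ‖q‖ < 1) (n : ℕ) :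
    qPochFin q q n ≠ 0 := by
  rw [qPochFin]
  rw [Finset.prod_ne_zero_iff]
  intro k _ h
  have h1 : q ^ (k + 1) = 1 := by rw [pow_succ]; linear_combination -h
  have h2 : ‖q‖ ^ (k + 1) = 1 := by
    rw [← norm_pow, h1]; simp
  have h3 : ‖q‖ ^ (k + 1) < 1 :=
    pow_lt_one₀ (norm_nonneg q) hq (by omega)
  linarith

def gb (q : ℂ) : ℕ → ℕ → ℂ
  | _, 0 => 1
  | 0, _ + 1 => 0
  | M + 1, k + 1 => gb q M (k + 1) + q ^ (M - k) * gb q M k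

@[simp] lemma gb_zero (q : ℂ) (M : ℕ) : gb q M 0 = 1 := by cases M <;> rfl

@[simp] lemma gb_zero_succ (q : ℂ) (k : ℕ) : gb q 0 (k + 1) = 0 := rfl

lemma gb_succ (q : ℂ) (M k : ℕ) :
    gb q (M + 1) (k + 1) = gb q M (k + 1) + q ^ (M - k) * gb q M k := rfl

lemma gb_eq_zero (q : ℂ) : ∀ M k, M < k → gb q M k = 0 := by
  intro M
  induction M with
  | zero => intro k hk; match k, hk with | k + 1, _ => rfl
  | succ M ih =>
      intro k hk
      match k, hk with
      | k + 1, hk =>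
        rw [gb_succ, ih (k + 1) (by omega), ih k (by omega)]
        ring

lemma gb_mul (q : ℂ) : ∀ M k, k ≤ M →
    gb q M k * (qPochFin q q k * qPochFin q q (M - k)) = qPochFin q q M := by
  intro M
  induction M with
  | zero =>
      intro k hk
      interval_cases k
      simp [qPochFin_zero]
  | succ M ih =>
      intro k hk
      match k with
      | 0 => simp [qPochFin_zero]
      | k + 1 =>
        rcases Nat.lt_or_ge k M with h | h
        · -- k + 1 ≤ M
          obtain ⟨j, hj⟩ : ∃ j, M = (k + 1) + j := ⟨M - (k+1), by omega⟩
          subst hj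
          have e1 : k + 1 + j + 1 - (k + 1) = j + 1 := by omega
          have e2 : k + 1 + j - (k + 1) = j := by omega
          have e3 : k + 1 + j - k = j + 1 := by omega
          have h1 := ih (k + 1) (by omega)
          have h2 := ih k (by omega)
          rw [e2] at h1
          have e4 : k + 1 + j - k = j + 1 := by omega
          rw [e4] at h2
          rw [gb_succ, e1, e3, qPochFin_succ q (k + 1 + j), qPochFin_succ q j,
            qPochFin_succ q k]
          rw [qPochFin_succ q k] at h1
          rw [qPochFin_succ q j] at h2
          linear_combination (1 - q ^ (j + 1)) * h1 + q ^ (j + 1) * (1 - q ^ (k + 1)) * h2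
        · -- k = M
          have hkM : k = M := by omega
          subst hkM
          rw [gb_succ, gb_eq_zero q k (k + 1) (by omega)]
          have e1 : k + 1 - (k + 1) = 0 := by omega
          have e2 : k - k = 0 := by omega
          rw [e1, e2, qPochFin_zero, pow_zero, qPochFin_succ]
          have h1 := ih k le_rfl
          rw [e2, qPochFin_zero] at h1
          linear_combination (1 - q ^ (k + 1)) * h1

lemma choose_succ_two (n : ℕ) : Nat.choose (n + 1) 2 = Nat.choose n 2 + n := by
  rw [Nat.choose_succ_succ, Nat.choose_one_right, Nat.add_comm]

lemma choose_two_even (i : ℕ) : Nat.choose (2 * i) 2 + i = 2 * i * i := by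
  induction i with
  | zero => simp
  | succ i ih =>
      have h2 : 2 * (i + 1) = 2 * i + 1 + 1 := by ring
      rw [h2, choose_succ_two, choose_succ_two]
      zify at ih ⊢
      linear_combination ih

lemma choose_two_odd (i : ℕ) : Nat.choose (2 * i + 1) 2 = 2 * i * i + i := by
  rw [choose_succ_two]
  have h := choose_two_even i
  zify at h ⊢
  linear_combination h

lemma qbinom (q : ℂ) : ∀ (M : ℕ) (a b : ℂ),
    ∑ k ∈ Finset.range (M + 1), q ^ Nat.choose k 2 * a ^ k * b ^ (M - k) * gb q M k
      = ∏ j ∈ Finset.range M, (b + a * q ^ j) := by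
  intro M
  induction M with
  | zero => intro a b; simp
  | succ M ih =>
    intro a b
    rw [Finset.prod_range_succ, ← ih a b]
    calc
      ∑ k ∈ Finset.range (M + 1 + 1), q ^ Nat.choose k 2 * a ^ k * b ^ (M + 1 - k) * gb q (M + 1) k
          = ∑ k ∈ Finset.range (M + 1),
              q ^ Nat.choose (k + 1) 2 * a ^ (k + 1) * b ^ (M + 1 - (k + 1)) * gb q (M + 1) (k + 1)
            + q ^ Nat.choose 0 2 * a ^ 0 * b ^ (M + 1 - 0) * gb q (M + 1) 0 :=
        Finset.sum_range_succ' _ (M + 1)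
      _ = ∑ k ∈ Finset.range (M + 1),
            (q ^ Nat.choose (k + 1) 2 * a ^ (k + 1) * b ^ (M - k) * gb q M (k + 1)
              + q ^ Nat.choose k 2 * a ^ k * b ^ (M - k) * gb q M k * (a * q ^ M))
            + b ^ (M + 1) := by
          congr 1
          · refine Finset.sum_congr rfl fun k hk => ?_
            rw [Finset.mem_range] at hk
            have e1 : M + 1 - (k + 1) = M - k := by omega
            have e2 : (q : ℂ) ^ k * q ^ (M - k) = q ^ M := by
              rw [← pow_add]; congr 1; omega
            rw [e1, gb_succ, choose_succ_two, pow_add]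
            linear_combination (q ^ Nat.choose k 2 * a ^ (k + 1) * b ^ (M - k) * gb q M k) * e2
          · simp
      _ = (∑ k ∈ Finset.range (M + 1),
            q ^ Nat.choose (k + 1) 2 * a ^ (k + 1) * b ^ (M - k) * gb q M (k + 1) + b ^ (M + 1))
          + (∑ k ∈ Finset.range (M + 1), q ^ Nat.choose k 2 * a ^ k * b ^ (M - k) * gb q M k)
            * (a * q ^ M) := by
          rw [Finset.sum_add_distrib, Finset.sum_mul]; ring
      _ = (∑ k ∈ Finset.range (M + 1), q ^ Nat.choose k 2 * a ^ k * b ^ (M - k) * gb q M k) * b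
          + (∑ k ∈ Finset.range (M + 1), q ^ Nat.choose k 2 * a ^ k * b ^ (M - k) * gb q M k)
            * (a * q ^ M) := by
          congr 1
          have h1 : ∑ k ∈ Finset.range (M + 1 + 1),
              q ^ Nat.choose k 2 * a ^ k * b ^ (M + 1 - k) * gb q M k
              = ∑ k ∈ Finset.range (M + 1),
                  q ^ Nat.choose (k + 1) 2 * a ^ (k + 1) * b ^ (M - k) * gb q M (k + 1)
                + b ^ (M + 1) := by
            rw [Finset.sum_range_succ' _ (M + 1)]
            congr 1
            · refine Finset.sum_congr rfl fun k hk => ?_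
              have e1 : M + 1 - (k + 1) = M - k := by omega
              rw [e1]
            · simp
          have h2 : ∑ k ∈ Finset.range (M + 1 + 1),
              q ^ Nat.choose k 2 * a ^ k * b ^ (M + 1 - k) * gb q M k
              = (∑ k ∈ Finset.range (M + 1),
                  q ^ Nat.choose k 2 * a ^ k * b ^ (M - k) * gb q M k) * b := by
            rw [Finset.sum_range_succ, gb_eq_zero q M (M + 1) (by omega), Finset.sum_mul]
            simp only [mul_zero, add_zero]
            refine Finset.sum_congr rfl fun k hk => ?_
            rw [Finset.mem_range] at hk
            have e : M + 1 - k = (M - k) + 1 := by omega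
            rw [e, pow_succ]; ring
          rw [← h1, h2]
      _ = (∑ k ∈ Finset.range (M + 1), q ^ Nat.choose k 2 * a ^ k * b ^ (M - k) * gb q M k)
            * (b + a * q ^ M) := by ring

lemma sum_range_even_odd (f : ℕ → ℂ) (n : ℕ) :
    ∑ k ∈ Finset.range (2 * n + 1), f k
      = ∑ i ∈ Finset.range (n + 1), f (2 * i) + ∑ i ∈ Finset.range n, f (2 * i + 1) := by
  induction n with
  | zero => simp
  | succ n ih =>
      have e : 2 * (n + 1) + 1 = (2 * n + 1) + 1 + 1 := by ring
      rw [e, Finset.sum_range_succ, Finset.sum_range_succ, ih,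
        Finset.sum_range_succ (fun i => f (2 * i)) (n + 1),
        Finset.sum_range_succ (fun i => f (2 * i + 1)) n]
      rw [show 2 * n + 1 + 1 = 2 * (n + 1) by ring]
      ring

lemma pt_even {q : ℂ} (hq : ‖q‖ < 1) (i j : ℕ) :
    q ^ Nat.choose (2 * i) 2 * (-q) ^ (2 * i) * (q ^ (i + j)) ^ (2 * (i + j) - 2 * i)
        * gb q (2 * (i + j)) (2 * i)
      = q ^ ((i + j) ^ 2) * qPochFin q q (2 * (i + j)) *
          (q ^ (i * (i + 1)) / qPochFin q q (2 * i) * (q ^ (j ^ 2) / qPochFin q q (2 * j))) := by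
  have p1 := qPochFin_ne_zero hq (2 * i)
  have p2 := qPochFin_ne_zero hq (2 * j)
  have hg := gb_mul q (2 * (i + j)) (2 * i) (by omega)
  rw [show 2 * (i + j) - 2 * i = 2 * j by omega] at hg ⊢
  rw [Even.neg_pow (even_two_mul i), ← pow_mul]
  have hexp : Nat.choose (2 * i) 2 + 2 * i + (i + j) * (2 * j)
      = (i + j) ^ 2 + (i * (i + 1) + j ^ 2) := by
    have h := choose_two_even i
    zify at h ⊢
    linear_combination h
  calc q ^ Nat.choose (2 * i) 2 * q ^ (2 * i) * q ^ ((i + j) * (2 * j)) * gb q (2 * (i + j)) (2 * i)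
      = q ^ (Nat.choose (2 * i) 2 + 2 * i + (i + j) * (2 * j)) * gb q (2 * (i + j)) (2 * i) := by
        rw [pow_add, pow_add]
    _ = q ^ ((i + j) ^ 2 + (i * (i + 1) + j ^ 2)) * gb q (2 * (i + j)) (2 * i) := by rw [hexp]
    _ = q ^ ((i + j) ^ 2) * qPochFin q q (2 * (i + j)) *
          (q ^ (i * (i + 1)) / qPochFin q q (2 * i) * (q ^ (j ^ 2) / qPochFin q q (2 * j))) := by
        rw [pow_add, pow_add, ← hg]
        field_simp

lemma pt_odd {q : ℂ} (hq : ‖q‖ < 1) (i j : ℕ) :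
    q ^ Nat.choose (2 * i + 1) 2 * (-q) ^ (2 * i + 1)
        * (q ^ (i + j + 1)) ^ (2 * (i + j + 1) - (2 * i + 1)) * gb q (2 * (i + j + 1)) (2 * i + 1)
      = -(q ^ ((i + j + 1) ^ 2) * qPochFin q q (2 * (i + j + 1)) *
          (q ^ ((i + 1) ^ 2) / qPochFin q q (2 * i + 1)
            * (q ^ (j * (j + 1)) / qPochFin q q (2 * j + 1)))) := by
  have p1 := qPochFin_ne_zero hq (2 * i + 1)
  have p2 := qPochFin_ne_zero hq (2 * j + 1)
  have hg := gb_mul q (2 * (i + j + 1)) (2 * i + 1) (by omega)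
  rw [show 2 * (i + j + 1) - (2 * i + 1) = 2 * j + 1 by omega] at hg ⊢
  rw [Odd.neg_pow (odd_two_mul_add_one i), ← pow_mul]
  have hexp : Nat.choose (2 * i + 1) 2 + (2 * i + 1) + (i + j + 1) * (2 * j + 1)
      = (i + j + 1) ^ 2 + ((i + 1) ^ 2 + j * (j + 1)) := by
    have h := choose_two_odd i
    zify at h ⊢
    linear_combination h
  calc q ^ Nat.choose (2 * i + 1) 2 * -q ^ (2 * i + 1) * q ^ ((i + j + 1) * (2 * j + 1))
        * gb q (2 * (i + j + 1)) (2 * i + 1)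
      = -(q ^ (Nat.choose (2 * i + 1) 2 + (2 * i + 1) + (i + j + 1) * (2 * j + 1))
          * gb q (2 * (i + j + 1)) (2 * i + 1)) := by
        rw [pow_add, pow_add]; ring
    _ = -(q ^ ((i + j + 1) ^ 2 + ((i + 1) ^ 2 + j * (j + 1)))
          * gb q (2 * (i + j + 1)) (2 * i + 1)) := by rw [hexp]
    _ = -(q ^ ((i + j + 1) ^ 2) * qPochFin q q (2 * (i + j + 1)) *
          (q ^ ((i + 1) ^ 2) / qPochFin q q (2 * i + 1)
            * (q ^ (j * (j + 1)) / qPochFin q q (2 * j + 1)))) := by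
        rw [pow_add, pow_add, ← hg]
        field_simp

lemma core {q : ℂ} (hq : ‖q‖ < 1) (N : ℕ) :
    ∑ p ∈ Finset.HasAntidiagonal.antidiagonal (N + 1),
        q ^ (p.1 * (p.1 + 1)) / qPochFin q q (2 * p.1) * (q ^ (p.2 ^ 2) / qPochFin q q (2 * p.2))
      = ∑ p ∈ Finset.HasAntidiagonal.antidiagonal N,
        q ^ ((p.1 + 1) ^ 2) / qPochFin q q (2 * p.1 + 1)
          * (q ^ (p.2 * (p.2 + 1)) / qPochFin q q (2 * p.2 + 1)) := by
  by_cases hq0 : q = 0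
  · subst hq0
    have hp : ∀ m, qPochFin 0 0 m = 1 := fun m => by simp [qPochFin]
    refine (Finset.sum_eq_zero ?_).trans (Finset.sum_eq_zero ?_).symm
    · intro p hp'
      rw [Finset.HasAntidiagonal.mem_antidiagonal] at hp'
      rw [hp, hp]
      rcases Nat.eq_zero_or_pos p.1 with h | h
      · have h2 : p.2 ^ 2 ≠ 0 := pow_ne_zero _ (by omega)
        rw [zero_pow h2]; simp
      · have h1 : p.1 * (p.1 + 1) ≠ 0 := Nat.mul_ne_zero (by omega) (by omega)
        rw [zero_pow h1]; simp
    · intro p _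
      rw [hp, hp]
      have h1 : (p.1 + 1) ^ 2 ≠ 0 := pow_ne_zero _ (by omega)
      rw [zero_pow h1]; simp
  · set N' := N + 1 with hN'
    have hS : ∑ k ∈ Finset.range (2 * N' + 1),
        q ^ Nat.choose k 2 * (-q) ^ k * (q ^ N') ^ (2 * N' - k) * gb q (2 * N') k = 0 := by
      rw [qbinom q (2 * N') (-q) (q ^ N')]
      refine Finset.prod_eq_zero (Finset.mem_range.mpr (show N < 2 * N' by omega)) ?_
      rw [hN', pow_succ]
      ring
    rw [sum_range_even_odd
      (fun k => q ^ Nat.choose k 2 * (-q) ^ k * (q ^ N') ^ (2 * N' - k) * gb q (2 * N') k) N'] at hS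
    have hE : ∑ i ∈ Finset.range (N' + 1),
        q ^ Nat.choose (2 * i) 2 * (-q) ^ (2 * i) * (q ^ N') ^ (2 * N' - 2 * i)
          * gb q (2 * N') (2 * i)
        = q ^ (N' ^ 2) * qPochFin q q (2 * N') *
          ∑ i ∈ Finset.range (N' + 1),
            q ^ (i * (i + 1)) / qPochFin q q (2 * i)
              * (q ^ ((N' - i) ^ 2) / qPochFin q q (2 * (N' - i))) := by
      rw [Finset.mul_sum]
      refine Finset.sum_congr rfl fun i hi => ?_
      rw [Finset.mem_range] at hi
      obtain ⟨j, hj⟩ : ∃ j, N' = i + j := ⟨N' - i, by omega⟩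
      have h2 : N' - i = j := by omega
      rw [h2]
      have h3 := pt_even hq i j
      rw [← hj] at h3
      exact h3
    have hO : ∑ i ∈ Finset.range N',
        q ^ Nat.choose (2 * i + 1) 2 * (-q) ^ (2 * i + 1) * (q ^ N') ^ (2 * N' - (2 * i + 1))
          * gb q (2 * N') (2 * i + 1)
        = -(q ^ (N' ^ 2) * qPochFin q q (2 * N') *
          ∑ i ∈ Finset.range N',
            q ^ ((i + 1) ^ 2) / qPochFin q q (2 * i + 1)
              * (q ^ ((N - i) * (N - i + 1)) / qPochFin q q (2 * (N - i) + 1))) := by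
      rw [Finset.mul_sum, ← Finset.sum_neg_distrib]
      refine Finset.sum_congr rfl fun i hi => ?_
      rw [Finset.mem_range] at hi
      obtain ⟨j, hj⟩ : ∃ j, N' = i + j + 1 := ⟨N' - i - 1, by omega⟩
      have h2 : N - i = j := by omega
      rw [h2]
      have h3 := pt_odd hq i j
      rw [← hj] at h3
      exact h3
    rw [hE, hO] at hS
    have hC : q ^ (N' ^ 2) * qPochFin q q (2 * N') ≠ 0 :=
      mul_ne_zero (pow_ne_zero _ hq0) (qPochFin_ne_zero hq _)
    have hLR : ∑ i ∈ Finset.range (N' + 1),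
          q ^ (i * (i + 1)) / qPochFin q q (2 * i)
            * (q ^ ((N' - i) ^ 2) / qPochFin q q (2 * (N' - i)))
        = ∑ i ∈ Finset.range N',
          q ^ ((i + 1) ^ 2) / qPochFin q q (2 * i + 1)
            * (q ^ ((N - i) * (N - i + 1)) / qPochFin q q (2 * (N - i) + 1)) := by
      apply mul_left_cancel₀ hC
      linear_combination hS
    rw [Finset.Nat.sum_antidiagonal_eq_sum_range_succ_mk, Finset.Nat.sum_antidiagonal_eq_sum_range_succ_mk]
    simpa using hLR

lemma one_sub_qpow_ne {q : ℂ} (hq : ‖q‖ < 1) (m : ℕ) : (1 : ℂ) - q ^ (m + 1) ≠ 0 := by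
  intro h
  have h1 : q ^ (m + 1) = 1 := by linear_combination -h
  have h2 : ‖q‖ ^ (m + 1) = 1 := by rw [← norm_pow, h1]; simp
  have h3 : ‖q‖ ^ (m + 1) < 1 :=
    pow_lt_one₀ (norm_nonneg q) hq (by omega)
  linarith

lemma summable_norm_aux {q : ℂ} (hq : ‖q‖ < 1) (x : ℂ) (e : ℕ → ℕ)
    (he : ∀ n, e n + n ≤ e (n + 1)) (c0 : ℕ) :
    Summable fun n => ‖q ^ e n / qPochFin q q (2 * n + c0) * x ^ (2 * n + c0)‖ := by
  have h1q : 0 < 1 - ‖q‖ := by linarith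
  have key : ∀ᶠ n in Filter.atTop,
      ‖q ^ e (n + 1) / qPochFin q q (2 * (n + 1) + c0) * x ^ (2 * (n + 1) + c0)‖
        ≤ (1 / 2) * ‖q ^ e n / qPochFin q q (2 * n + c0) * x ^ (2 * n + c0)‖ := by
    have ht : Filter.Tendsto
        (fun n => ‖q‖ ^ n * (‖x‖ ^ 2 / (1 - ‖q‖) ^ 2))
        Filter.atTop (nhds 0) := by
      simpa using
        (tendsto_pow_atTop_nhds_zero_of_lt_one (norm_nonneg q) hq).mul_const
          (‖x‖ ^ 2 / (1 - ‖q‖) ^ 2)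
    filter_upwards [ht.eventually (gt_mem_nhds one_half_pos)] with n hn
    have hrec : q ^ e (n + 1) / qPochFin q q (2 * (n + 1) + c0) * x ^ (2 * (n + 1) + c0)
        = q ^ e n / qPochFin q q (2 * n + c0) * x ^ (2 * n + c0) *
        (q ^ (e (n + 1) - e n) * x ^ 2 /
          ((1 - q ^ (2 * n + c0 + 1)) * (1 - q ^ (2 * n + c0 + 2)))) := by
      have hp1 : (1 : ℂ) - q ^ (2 * n + c0 + 1) ≠ 0 := one_sub_qpow_ne hq _
      have hp2 : (1 : ℂ) - q ^ (2 * n + c0 + 2) ≠ 0 := by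
        have := one_sub_qpow_ne hq (2 * n + c0 + 1); simpa using this
      have hpo : qPochFin q q (2 * (n + 1) + c0)
          = qPochFin q q (2 * n + c0) * (1 - q ^ (2 * n + c0 + 1)) * (1 - q ^ (2 * n + c0 + 2)) := by
        rw [show 2 * (n + 1) + c0 = (2 * n + c0 + 1) + 1 by omega, qPochFin_succ,
          show 2 * n + c0 + 1 = (2 * n + c0) + 1 by omega, qPochFin_succ]
      have hqe : (q : ℂ) ^ e (n + 1) = q ^ e n * q ^ (e (n + 1) - e n) := by
        rw [← pow_add]; congr 1; have := he n; omega
      have hxe : (x : ℂ) ^ (2 * (n + 1) + c0) = x ^ (2 * n + c0) * x ^ 2 := by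
        rw [← pow_add]; congr 1; omega
      have hpn := qPochFin_ne_zero hq (2 * n + c0)
      rw [hpo, hqe, hxe]
      field_simp
    rw [hrec, norm_mul,
      mul_comm (‖q ^ e n / qPochFin q q (2 * n + c0) * x ^ (2 * n + c0)‖)]
    have hb : ‖q ^ (e (n + 1) - e n) * x ^ 2 /
        ((1 - q ^ (2 * n + c0 + 1)) * (1 - q ^ (2 * n + c0 + 2)))‖
        ≤ ‖q‖ ^ n * (‖x‖ ^ 2 / (1 - ‖q‖) ^ 2) := by
      rw [norm_div, norm_mul, norm_pow, norm_mul, norm_pow]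
      have hd1 : 1 - ‖q‖ ≤ ‖1 - q ^ (2 * n + c0 + 1)‖ := by
        have h0 := norm_sub_norm_le (1 : ℂ) (q ^ (2 * n + c0 + 1))
        have h2 : ‖(q : ℂ) ^ (2 * n + c0 + 1)‖ ≤ ‖q‖ := by
          rw [norm_pow]
          exact pow_le_of_le_one (norm_nonneg q) hq.le (by omega)
        simp only [norm_one] at h0
        linarith
      have hd2 : 1 - ‖q‖ ≤ ‖1 - q ^ (2 * n + c0 + 2)‖ := by
        have h0 := norm_sub_norm_le (1 : ℂ) (q ^ (2 * n + c0 + 2))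
        have h2 : ‖(q : ℂ) ^ (2 * n + c0 + 2)‖ ≤ ‖q‖ := by
          rw [norm_pow]
          exact pow_le_of_le_one (norm_nonneg q) hq.le (by omega)
        simp only [norm_one] at h0
        linarith
      have hnum : ‖q‖ ^ (e (n + 1) - e n) * ‖x‖ ^ 2 ≤ ‖q‖ ^ n * ‖x‖ ^ 2 := by
        have hle : ‖q‖ ^ (e (n + 1) - e n) ≤ ‖q‖ ^ n := by
          apply pow_le_pow_of_le_one (norm_nonneg q) hq.le
          have := he n; omega
        have hx2 : (0 : ℝ) ≤ ‖x‖ ^ 2 := by positivity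
        exact mul_le_mul_of_nonneg_right hle hx2
      have hden : (1 - ‖q‖) ^ 2
          ≤ ‖1 - q ^ (2 * n + c0 + 1)‖ * ‖1 - q ^ (2 * n + c0 + 2)‖ := by
        calc (1 - ‖q‖) ^ 2 = (1 - ‖q‖) * (1 - ‖q‖) := by ring
          _ ≤ ‖1 - q ^ (2 * n + c0 + 1)‖ * ‖1 - q ^ (2 * n + c0 + 2)‖ :=
            mul_le_mul hd1 hd2 h1q.le (norm_nonneg _)
      calc ‖q‖ ^ (e (n + 1) - e n) * ‖x‖ ^ 2 /
            (‖1 - q ^ (2 * n + c0 + 1)‖ * ‖1 - q ^ (2 * n + c0 + 2)‖)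
          ≤ ‖q‖ ^ n * ‖x‖ ^ 2 / (1 - ‖q‖) ^ 2 :=
            div_le_div₀ (by positivity) hnum (by positivity) hden
        _ = ‖q‖ ^ n * (‖x‖ ^ 2 / (1 - ‖q‖) ^ 2) := by ring
    calc ‖q ^ (e (n + 1) - e n) * x ^ 2 /
          ((1 - q ^ (2 * n + c0 + 1)) * (1 - q ^ (2 * n + c0 + 2)))‖ *
          ‖q ^ e n / qPochFin q q (2 * n + c0) * x ^ (2 * n + c0)‖
        ≤ (‖q‖ ^ n * (‖x‖ ^ 2 / (1 - ‖q‖) ^ 2)) *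
          ‖q ^ e n / qPochFin q q (2 * n + c0) * x ^ (2 * n + c0)‖ :=
          mul_le_mul_of_nonneg_right hb (norm_nonneg _)
      _ ≤ (1 / 2) * ‖q ^ e n / qPochFin q q (2 * n + c0) * x ^ (2 * n + c0)‖ :=
          mul_le_mul_of_nonneg_right hn.le (norm_nonneg _)
  apply summable_of_ratio_norm_eventually_le one_half_lt_one
  exact key.mono fun n h => by rw [norm_norm, norm_norm]; exact h

/-- Two-variable 2×2 determinant identity (Proposition 1.7). -/
theorem two_variable_determinant (x q : ℂ) (hq : ‖q‖ < 1) :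
    (∑' n : ℕ, q ^ (n * (n + 1)) / qPochFin q q (2 * n) * x ^ (2 * n)) *
        (∑' n : ℕ, q ^ (n ^ 2) / qPochFin q q (2 * n) * x ^ (2 * n)) -
      (∑' n : ℕ, q ^ ((n + 1) ^ 2) / qPochFin q q (2 * n + 1) * x ^ (2 * n + 1)) *
        (∑' n : ℕ, q ^ (n * (n + 1)) / qPochFin q q (2 * n + 1) * x ^ (2 * n + 1)) = 1 := by

  classical
  have hA : Summable fun n : ℕ => ‖q ^ (n * (n + 1)) / qPochFin q q (2 * n) * x ^ (2 * n)‖ := by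
    simpa only [Nat.add_zero] using
      summable_norm_aux hq x (fun n => n * (n + 1)) (fun n => by nlinarith) 0
  have hC : Summable fun n : ℕ => ‖q ^ (n ^ 2) / qPochFin q q (2 * n) * x ^ (2 * n)‖ := by
    simpa only [Nat.add_zero] using
      summable_norm_aux hq x (fun n => n ^ 2) (fun n => by nlinarith) 0
  have hB : Summable fun n : ℕ =>
      ‖q ^ ((n + 1) ^ 2) / qPochFin q q (2 * n + 1) * x ^ (2 * n + 1)‖ :=
    summable_norm_aux hq x (fun n => (n + 1) ^ 2) (fun n => by nlinarith) 1
  have hD : Summable fun n : ℕ =>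
      ‖q ^ (n * (n + 1)) / qPochFin q q (2 * n + 1) * x ^ (2 * n + 1)‖ :=
    summable_norm_aux hq x (fun n => n * (n + 1)) (fun n => by nlinarith) 1
  rw [tsum_mul_tsum_eq_tsum_sum_antidiagonal_of_summable_norm hA hC,
    tsum_mul_tsum_eq_tsum_sum_antidiagonal_of_summable_norm hB hD]
  have hFA : Summable (fun n : ℕ => ∑ p ∈ Finset.HasAntidiagonal.antidiagonal n,
      (q ^ (p.1 * (p.1 + 1)) / qPochFin q q (2 * p.1) * x ^ (2 * p.1)) *
        (q ^ (p.2 ^ 2) / qPochFin q q (2 * p.2) * x ^ (2 * p.2))) :=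
    (summable_norm_sum_mul_antidiagonal_of_summable_norm hA hC).of_norm
  have hFB : Summable (fun n : ℕ => ∑ p ∈ Finset.HasAntidiagonal.antidiagonal n,
      (q ^ ((p.1 + 1) ^ 2) / qPochFin q q (2 * p.1 + 1) * x ^ (2 * p.1 + 1)) *
        (q ^ (p.2 * (p.2 + 1)) / qPochFin q q (2 * p.2 + 1) * x ^ (2 * p.2 + 1))) :=
    (summable_norm_sum_mul_antidiagonal_of_summable_norm hB hD).of_norm
  set FA := fun n : ℕ => ∑ p ∈ Finset.HasAntidiagonal.antidiagonal n,
      (q ^ (p.1 * (p.1 + 1)) / qPochFin q q (2 * p.1) * x ^ (2 * p.1)) *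
        (q ^ (p.2 ^ 2) / qPochFin q q (2 * p.2) * x ^ (2 * p.2)) with hFAdef
  set FB := fun n : ℕ => ∑ p ∈ Finset.HasAntidiagonal.antidiagonal n,
      (q ^ ((p.1 + 1) ^ 2) / qPochFin q q (2 * p.1 + 1) * x ^ (2 * p.1 + 1)) *
        (q ^ (p.2 * (p.2 + 1)) / qPochFin q q (2 * p.2 + 1) * x ^ (2 * p.2 + 1)) with hFBdef
  set G := fun n : ℕ => if n = 0 then (0 : ℂ) else FB (n - 1) with hGdef
  have hGsh : (fun n : ℕ => G (n + 1)) = FB := by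
    funext n; simp [hGdef]
  have hGsum : Summable G := by
    rw [← summable_nat_add_iff 1, hGsh]
    exact hFB
  have hFBG : ∑' n, FB n = ∑' n, G n := by
    have h0 : G 0 = 0 := by simp [hGdef]
    rw [hGsum.tsum_eq_zero_add, h0, zero_add, hGsh]
  rw [hFBG, ← hFA.tsum_sub hGsum]
  have hterm : ∀ n : ℕ, FA n - G n = if n = 0 then (1 : ℂ) else 0 := by
    intro n
    cases n with
    | zero =>
        rw [if_pos rfl]
        have h0 : G 0 = 0 := by simp [hGdef]
        rw [h0, sub_zero, hFAdef]
        simp [qPochFin]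
    | succ n =>
        rw [if_neg (Nat.succ_ne_zero n)]
        have hG1 : G (n + 1) = FB n := by simp [hGdef]
        rw [hG1]
        have hxA : FA (n + 1) = (∑ p ∈ Finset.HasAntidiagonal.antidiagonal (n + 1),
            q ^ (p.1 * (p.1 + 1)) / qPochFin q q (2 * p.1) *
              (q ^ (p.2 ^ 2) / qPochFin q q (2 * p.2))) * x ^ (2 * (n + 1)) := by
          rw [hFAdef, Finset.sum_mul]
          refine Finset.sum_congr rfl fun p hp => ?_
          rw [Finset.HasAntidiagonal.mem_antidiagonal] at hp
          have hx : x ^ (2 * p.1) * x ^ (2 * p.2) = x ^ (2 * (n + 1)) := by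
            rw [← pow_add]; congr 1; omega
          calc (q ^ (p.1 * (p.1 + 1)) / qPochFin q q (2 * p.1) * x ^ (2 * p.1)) *
                (q ^ (p.2 ^ 2) / qPochFin q q (2 * p.2) * x ^ (2 * p.2))
              = q ^ (p.1 * (p.1 + 1)) / qPochFin q q (2 * p.1) *
                  (q ^ (p.2 ^ 2) / qPochFin q q (2 * p.2)) *
                  (x ^ (2 * p.1) * x ^ (2 * p.2)) := by ring
            _ = _ := by rw [hx]
        have hxB : FB n = (∑ p ∈ Finset.HasAntidiagonal.antidiagonal n,
            q ^ ((p.1 + 1) ^ 2) / qPochFin q q (2 * p.1 + 1) *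
              (q ^ (p.2 * (p.2 + 1)) / qPochFin q q (2 * p.2 + 1))) * x ^ (2 * (n + 1)) := by
          rw [hFBdef, Finset.sum_mul]
          refine Finset.sum_congr rfl fun p hp => ?_
          rw [Finset.HasAntidiagonal.mem_antidiagonal] at hp
          have hx : x ^ (2 * p.1 + 1) * x ^ (2 * p.2 + 1) = x ^ (2 * (n + 1)) := by
            rw [← pow_add]; congr 1; omega
          calc (q ^ ((p.1 + 1) ^ 2) / qPochFin q q (2 * p.1 + 1) * x ^ (2 * p.1 + 1)) *
                (q ^ (p.2 * (p.2 + 1)) / qPochFin q q (2 * p.2 + 1) * x ^ (2 * p.2 + 1))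
              = q ^ ((p.1 + 1) ^ 2) / qPochFin q q (2 * p.1 + 1) *
                  (q ^ (p.2 * (p.2 + 1)) / qPochFin q q (2 * p.2 + 1)) *
                  (x ^ (2 * p.1 + 1) * x ^ (2 * p.2 + 1)) := by ring
            _ = _ := by rw [hx]
        rw [hxA, hxB, core hq n, sub_self]
  rw [tsum_congr hterm, tsum_ite_eq]

end
end

section
/- Twisted two-variable Rogers–Ramanujan variation (Theorem 5.6): for all complex q, x with 0 < |q| < 1 and |x| > 1, one has (x^{−2};q²)·∑_{n∈ℤ} q^{n²} x^{2n} (−q^{2n+1}; q²) = ∑_{n∈ℤ} q^{n²} x^{2n} and (x^{−2};q²)·∑_{n∈ℤ} q^{n²+n} x^{2n+1} (−q^{2n+2}; q²) = ∑_{n∈ℤ} q^{n²+n} x^{2n+1}, where (−q^m; q²) := ∏_{k=0}^{∞}(1 + q^{m+2k}) for m ∈ ℤ; both twisted bilateral series converge absolutely when |x| > 1. -/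
open scoped BigOperators

noncomputable section

/-- `(a; q) := ∏_{n=0}^∞ (1 - qⁿ a)`. -/
def qPoch (q a : ℂ) : ℂ := ∏' n : ℕ, (1 - q ^ n * a)

/-- `(−q^m; q²) := ∏_{k=0}^∞ (1 + q^{m+2k})` for `m : ℤ`. -/
def qPochNegShift2 (q : ℂ) (m : ℤ) : ℂ := ∏' k : ℕ, (1 + q ^ (m + 2 * (k : ℤ)))

namespace TwistedRR

open Filter Finset Topology

/-- The finite `q`-Pochhammer `(Q;Q)_n = ∏_{k=1}^n (1 - Q^k)`. -/
def P (Q : ℂ) (n : ℕ) : ℂ := ∏ k ∈ Finset.range n, (1 - Q ^ (k + 1))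

/-- Triangular numbers `tri j = j(j-1)/2`. -/
def tri : ℕ → ℕ
  | 0 => 0
  | n + 1 => tri n + n

/-- Gaussian binomial coefficients (as complex numbers), via the `q`-Pascal recursion. -/
def gb (Q : ℂ) : ℕ → ℕ → ℂ
  | _, 0 => 1
  | 0, _ + 1 => 0
  | N + 1, j + 1 => gb Q N (j + 1) + Q ^ (N - j) * gb Q N j

lemma two_tri_add (j : ℕ) : 2 * tri j + j = j * j := by
  induction j with
  | zero => simp [tri]
  | succ n ih => simp only [tri]; ring_nf; ring_nf at ih; omega

lemma tri_succ (j : ℕ) : tri (j + 1) = tri j + j := rfl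

variable {Q : ℂ}

lemma one_sub_pow_ne (hQ : ‖Q‖ < 1) (k : ℕ) : (1 : ℂ) - Q ^ (k + 1) ≠ 0 := by
  intro h
  have h1 : Q ^ (k + 1) = 1 := by linear_combination -h
  have : ‖Q ^ (k + 1)‖ < 1 := by
    rw [norm_pow]
    exact pow_lt_one₀ (norm_nonneg _) hQ (Nat.succ_ne_zero k)
  rw [h1, norm_one] at this
  exact lt_irrefl _ this

lemma P_ne_zero (hQ : ‖Q‖ < 1) (n : ℕ) : P Q n ≠ 0 :=
  Finset.prod_ne_zero_iff.2 fun k _ => one_sub_pow_ne hQ k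

lemma P_zero : P Q 0 = 1 := by simp [P]

lemma P_succ (n : ℕ) : P Q (n + 1) = P Q n * (1 - Q ^ (n + 1)) := Finset.prod_range_succ _ _

lemma gb_zero_right (N : ℕ) : gb Q N 0 = 1 := by cases N <;> rfl

lemma gb_eq_zero : ∀ {N j : ℕ}, N < j → gb Q N j = 0 := by
  intro N
  induction N with
  | zero => intro j hj; match j, hj with
            | j + 1, _ => rfl
  | succ n ih =>
      intro j hj
      match j, hj with
      | j + 1, hj =>
        have h1 : n < j + 1 := by omega
        have h2 : n < j := by omega
        simp [gb, ih h1, ih h2]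

lemma gb_mul_P (hQ : ‖Q‖ < 1) : ∀ N j : ℕ, j ≤ N → gb Q N j * (P Q j * P Q (N - j)) = P Q N := by
  intro N
  induction N with
  | zero =>
      intro j hj
      interval_cases j
      simp [gb_zero_right, P_zero]
  | succ n ih =>
      intro j hj
      match j with
      | 0 => simp [gb_zero_right, P_zero]
      | j + 1 =>
        have hjn : j ≤ n := by omega
        rcases eq_or_lt_of_le hjn with h | h
        · -- j = n, top case
          subst h
          have hgb : gb Q (j + 1) (j + 1) = gb Q j j := by
            simp [gb, gb_eq_zero (Nat.lt_succ_self j)]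
          have hjj : gb Q j j = 1 := by
            have := ih j le_rfl
            simp only [Nat.sub_self, P_zero, mul_one] at this
            have hP := P_ne_zero (Q := Q) hQ j
            field_simp at this
            exact this
          simp [hgb, hjj, Nat.sub_self, P_zero]
        · -- j + 1 ≤ n
          have h1 : j + 1 ≤ n := h
          have e1 : n + 1 - (j + 1) = (n - (j + 1)) + 1 := by omega
          have e2 : n - j = (n - (j + 1)) + 1 := by omega
          have key1 := ih (j + 1) h1
          have key2 := ih j (by omega)
          show (gb Q n (j + 1) + Q ^ (n - j) * gb Q n j) * (P Q (j + 1) * P Q (n + 1 - (j + 1))) = P Q (n + 1)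
          rw [e1, P_succ (n - (j+1)), P_succ n, add_mul]
          have r1 : gb Q n (j + 1) * (P Q (j + 1) * (P Q (n - (j + 1)) * (1 - Q ^ (n - (j + 1) + 1)))) =
              P Q n * (1 - Q ^ (n - (j + 1) + 1)) := by
            rw [← key1]; ring
          have r2 : Q ^ (n - j) * gb Q n j * (P Q (j + 1) * (P Q (n - (j + 1)) * (1 - Q ^ (n - (j + 1) + 1)))) =
              Q ^ (n - j) * (1 - Q ^ (j + 1)) * (P Q n) := by
            rw [← key2, P_succ j, e2, P_succ (n - (j + 1))]
            ring
          rw [r1, r2]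
          have e3 : Q ^ (n - j) * Q ^ (j + 1) = Q ^ (n + 1) := by
            rw [← pow_add]; congr 1; omega
          have e4 : n - (j + 1) + 1 = n - j := by omega
          rw [e4, ← e3]
          ring


/-- The finite Gauss binomial theorem. -/
lemma gauss_binomial (w : ℂ) : ∀ N : ℕ,
    ∏ k ∈ Finset.range N, (1 + w * Q ^ k) =
      ∑ j ∈ Finset.range (N + 1), Q ^ tri j * gb Q N j * w ^ j := by
  intro N
  induction N with
  | zero => simp [tri, gb_zero_right]
  | succ N ih =>
      rw [Finset.prod_range_succ, ih,
        Finset.sum_range_succ' (fun j => Q ^ tri j * gb Q (N + 1) j * w ^ j) (N + 1)]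
      have hsplit : ∀ j ∈ Finset.range (N + 1),
          Q ^ tri (j + 1) * gb Q (N + 1) (j + 1) * w ^ (j + 1)
            = Q ^ tri (j + 1) * gb Q N (j + 1) * w ^ (j + 1)
              + (Q ^ N * w) * (Q ^ tri j * gb Q N j * w ^ j) := by
        intro j hj
        have hj' : j ≤ N := by
          have := Finset.mem_range.1 hj; omega
        have hgb : gb Q (N + 1) (j + 1) = gb Q N (j + 1) + Q ^ (N - j) * gb Q N j := rfl
        have htri : Q ^ tri (j + 1) * Q ^ (N - j) = Q ^ tri j * Q ^ N := by
          rw [← pow_add, ← pow_add]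
          congr 1
          rw [tri_succ]; omega
        rw [hgb]
        linear_combination (gb Q N j * w ^ (j + 1)) * htri
      rw [Finset.sum_congr rfl hsplit, Finset.sum_add_distrib, ← Finset.mul_sum]
      have hzero : gb Q N (N + 1) = 0 := gb_eq_zero (Nat.lt_succ_self N)
      have hA : (∑ j ∈ Finset.range (N + 1), Q ^ tri (j + 1) * gb Q N (j + 1) * w ^ (j + 1))
          + Q ^ tri 0 * gb Q N 0 * w ^ 0
          = ∑ j ∈ Finset.range (N + 1), Q ^ tri j * gb Q N j * w ^ j := by
        rw [← Finset.sum_range_succ' (fun j => Q ^ tri j * gb Q N j * w ^ j) (N + 1),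
          Finset.sum_range_succ, hzero]
        simp
      simp only [gb_zero_right, pow_zero, mul_one] at hA ⊢
      have htri0 : tri 0 = 0 := rfl
      rw [htri0] at hA ⊢
      simp only [pow_zero, one_mul] at hA ⊢
      linear_combination -hA


lemma alt_sum_zero (N : ℕ) (hN : 1 ≤ N) :
    ∑ j ∈ Finset.range (N + 1), Q ^ tri j * gb Q N j * (-1 : ℂ) ^ j = 0 := by
  have := gauss_binomial (Q := Q) (-1) N
  rw [Finset.prod_eq_zero (Finset.mem_range.2 hN) (by simp)] at this
  exact this.symm

/-- Ratio-test summability helper. -/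
lemma summable_norm_of_mul_ratio {𝕜 : Type*} [NormedField 𝕜] [CompleteSpace 𝕜]
    (a c : ℕ → 𝕜) (h : ∀ j, a (j + 1) = a j * c j) {l : ℝ} (hl : l < 1)
    (hc : Tendsto (fun j => ‖c j‖) atTop (𝓝 l)) :
    Summable (fun j => ‖a j‖) ∧ Summable a := by
  have hl0 : (l + 1) / 2 < 1 := by linarith
  have hev : ∀ᶠ j in atTop, ‖c j‖ ≤ (l + 1) / 2 := by
    have : l < (l + 1) / 2 := by linarith
    exact hc.eventually_le_const this
  have key : ∀ᶠ j in atTop, ‖a (j + 1)‖ ≤ (l + 1) / 2 * ‖a j‖ := by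
    filter_upwards [hev] with j hj
    rw [h j, norm_mul, mul_comm]
    exact mul_le_mul_of_nonneg_right hj (norm_nonneg _)
  constructor
  · apply summable_of_ratio_norm_eventually_le hl0
    filter_upwards [key] with j hj
    simpa using hj
  · exact summable_of_ratio_norm_eventually_le hl0 key

lemma multipliable_one_add (f : ℕ → ℂ) (hf : Summable f) :
    Multipliable fun k => 1 + f k := by
  by_cases hzero : ∃ k0, (1 : ℂ) + f k0 = 0
  · obtain ⟨k0, hk0⟩ := hzero
    refine ⟨0, ?_⟩
    rw [HasProd]
    have hev : ∀ᶠ s : Finset ℕ in atTop, (∏ k ∈ s, (1 + f k)) = 0 := by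
      filter_upwards [Filter.eventually_ge_atTop ({k0} : Finset ℕ)] with s hs
      exact Finset.prod_eq_zero (hs (Finset.mem_singleton_self k0)) hk0
    exact Tendsto.congr' (by filter_upwards [hev] with s hs; exact hs.symm) tendsto_const_nhds
  · push_neg at hzero
    apply Complex.multipliable_of_summable_log (f := fun k => 1 + f k)
    have htends : Tendsto f atTop (𝓝 0) := hf.tendsto_atTop_zero
    have hev : ∀ᶠ k in atTop, ‖f k‖ ≤ 1 / 2 := by
      have h0 : Tendsto (fun k => ‖f k‖) atTop (𝓝 0) := by simpa using htends.norm
      exact h0.eventually_le_const (by norm_num : (0 : ℝ) < 1 / 2)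
    apply Summable.of_norm_bounded_eventually_nat (g := fun k => 3 / 2 * ‖f k‖)
      (hf.norm.mul_left _)
    filter_upwards [hev] with k hk
    exact Complex.norm_log_one_add_half_le_self hk


lemma gb_form (hQ : ‖Q‖ < 1) {N j : ℕ} (hN : j ≤ N) :
    gb Q N j = (∏ i ∈ Finset.range j, (1 - Q ^ (N - j + i + 1))) * (P Q j)⁻¹ := by
  have hPj := P_ne_zero (Q := Q) hQ j
  have key := gb_mul_P hQ N j hN
  have hPNj := P_ne_zero (Q := Q) hQ (N - j)
  have hsplit : P Q N = P Q (N - j) * ∏ i ∈ Finset.range j, (1 - Q ^ (N - j + i + 1)) := by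
    have e : (N - j) + j = N := by omega
    calc P Q N = P Q ((N - j) + j) := by rw [e]
      _ = _ := Finset.prod_range_add (fun k => 1 - Q ^ (k + 1)) (N - j) j
  rw [eq_mul_inv_iff_mul_eq₀ hPj]
  apply mul_right_cancel₀ hPNj
  linear_combination key + hsplit

lemma gb_tendsto (hQ : ‖Q‖ < 1) (j : ℕ) :
    Tendsto (fun N => gb Q N j) atTop (𝓝 (P Q j)⁻¹) := by
  have hform : ∀ᶠ N in atTop,
      gb Q N j = (∏ i ∈ Finset.range j, (1 - Q ^ (N - j + i + 1))) * (P Q j)⁻¹ := by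
    filter_upwards [eventually_ge_atTop j] with N hN
    exact gb_form hQ hN
  have hlim : Tendsto (fun N => (∏ i ∈ Finset.range j, (1 - Q ^ (N - j + i + 1))) * (P Q j)⁻¹)
      atTop (𝓝 ((∏ _i ∈ Finset.range j, (1 : ℂ)) * (P Q j)⁻¹)) := by
    apply Tendsto.mul_const
    apply tendsto_finset_prod
    intro i _
    have harg : Tendsto (fun N : ℕ => N - j + i + 1) atTop atTop := by
      apply tendsto_atTop_atTop.2
      intro b
      exact ⟨b + j, fun a ha => by omega⟩
    have h1 : Tendsto (fun N : ℕ => Q ^ (N - j + i + 1)) atTop (𝓝 0) :=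
      (tendsto_pow_atTop_nhds_zero_of_norm_lt_one hQ).comp harg
    simpa using tendsto_const_nhds.sub h1
  simp only [Finset.prod_const_one, one_mul] at hlim
  exact Tendsto.congr' (hform.mono fun N h => h.symm) hlim

lemma gb_norm_le (hQ : ‖Q‖ < 1) (N j : ℕ) : ‖gb Q N j‖ ≤ 2 ^ j * ‖P Q j‖⁻¹ := by
  rcases le_or_gt j N with h | h
  · rw [gb_form hQ h, norm_mul, norm_inv]
    apply mul_le_mul_of_nonneg_right _ (by positivity)
    calc ‖∏ i ∈ Finset.range j, (1 - Q ^ (N - j + i + 1))‖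
        = ∏ i ∈ Finset.range j, ‖(1 - Q ^ (N - j + i + 1))‖ := by rw [norm_prod]
      _ ≤ ∏ _i ∈ Finset.range j, 2 := by
          apply Finset.prod_le_prod (fun i _ => norm_nonneg _)
          intro i _
          calc ‖(1 : ℂ) - Q ^ (N - j + i + 1)‖ ≤ ‖(1 : ℂ)‖ + ‖Q ^ (N - j + i + 1)‖ :=
                norm_sub_le _ _
            _ ≤ 1 + 1 := by
                rw [norm_one, norm_pow]
                have : ‖Q‖ ^ (N - j + i + 1) ≤ 1 :=
                  pow_le_one₀ (norm_nonneg _) hQ.le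
                linarith
            _ = 2 := by norm_num
      _ = 2 ^ j := by rw [Finset.prod_const, Finset.card_range]
  · rw [gb_eq_zero h, norm_zero]
    positivity

lemma tendsto_one_sub_pow (hQ : ‖Q‖ < 1) :
    Tendsto (fun j : ℕ => 1 - Q ^ (j + 1)) atTop (𝓝 1) := by
  have h0 : Tendsto (fun j : ℕ => Q ^ (j + 1)) atTop (𝓝 0) :=
    (tendsto_pow_atTop_nhds_zero_of_norm_lt_one hQ).comp (tendsto_add_atTop_nat 1)
  simpa using tendsto_const_nhds.sub h0

lemma coeff_ratio (hQ : ‖Q‖ < 1) (v : ℂ) (j : ℕ) :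
    Q ^ tri (j + 1) * v ^ (j + 1) / P Q (j + 1)
      = (Q ^ tri j * v ^ j / P Q j) * (Q ^ j * v / (1 - Q ^ (j + 1))) := by
  have h1 := P_ne_zero (Q := Q) hQ j
  have h2 := one_sub_pow_ne (Q := Q) hQ j
  rw [P_succ, tri_succ, pow_add, pow_succ]
  field_simp

lemma summable_coeff (hQ : ‖Q‖ < 1) (v : ℂ) :
    Summable (fun j => ‖Q ^ tri j * v ^ j / P Q j‖)
      ∧ Summable (fun j => Q ^ tri j * v ^ j / P Q j) := by
  apply summable_norm_of_mul_ratio _ (fun j => Q ^ j * v / (1 - Q ^ (j + 1)))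
    (coeff_ratio hQ v) one_pos
  have hnum : Tendsto (fun j : ℕ => Q ^ j * v) atTop (𝓝 0) := by
    simpa using (tendsto_pow_atTop_nhds_zero_of_norm_lt_one hQ).mul_const v
  have hdiv : Tendsto (fun j : ℕ => Q ^ j * v / (1 - Q ^ (j + 1))) atTop (𝓝 (0 / 1)) :=
    hnum.div (tendsto_one_sub_pow hQ) one_ne_zero
  have := hdiv.norm
  simpa using this

/-- Euler's second identity: `∏ (1 + w Q^k) = ∑_j Q^{j(j-1)/2} w^j / (Q;Q)_j`. -/
lemma euler_prod (hQ : ‖Q‖ < 1) (w : ℂ) :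
    ∏' k : ℕ, (1 + w * Q ^ k) = ∑' j : ℕ, Q ^ tri j * w ^ j / P Q j := by
  have hmult : Multipliable fun k : ℕ => 1 + w * Q ^ k :=
    multipliable_one_add _ ((summable_geometric_of_norm_lt_one hQ).mul_left w)
  have hprod : Tendsto (fun N => ∏ k ∈ Finset.range N, (1 + w * Q ^ k)) atTop
      (𝓝 (∏' k : ℕ, (1 + w * Q ^ k))) := hmult.hasProd.tendsto_prod_nat
  have hps : ∀ N, ∏ k ∈ Finset.range N, (1 + w * Q ^ k)
      = ∑' j : ℕ, Q ^ tri j * gb Q N j * w ^ j := by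
    intro N
    rw [gauss_binomial w N]
    symm
    apply tsum_eq_sum
    intro j hj
    have hlt : N < j := by
      rcases Nat.lt_or_ge j (N + 1) with h | h
      · exact absurd (Finset.mem_range.2 h) hj
      · omega
    simp [gb_eq_zero hlt]
  -- the dominating bound
  have hsb : Summable (fun j => ‖Q ^ tri j * (2 * w) ^ j / P Q j‖) := (summable_coeff hQ (2 * w)).1
  -- dominated convergence
  have hdom : Tendsto (fun N => ∑' j : ℕ, Q ^ tri j * gb Q N j * w ^ j) atTop
      (𝓝 (∑' j : ℕ, Q ^ tri j * w ^ j / P Q j)) := by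
    apply tendsto_tsum_of_dominated_convergence hsb
    · intro j
      have h := ((gb_tendsto hQ j).const_mul (Q ^ tri j)).mul_const (w ^ j)
      have he : Q ^ tri j * (P Q j)⁻¹ * w ^ j = Q ^ tri j * w ^ j / P Q j := by
        rw [div_eq_mul_inv]; ring
      rwa [he] at h
    · apply Filter.Eventually.of_forall
      intro N j
      rw [norm_mul, norm_mul]
      have hgb := gb_norm_le hQ N j
      have hstep : ‖Q ^ tri j‖ * ‖gb Q N j‖ * ‖w ^ j‖
          ≤ ‖Q ^ tri j‖ * (2 ^ j * ‖P Q j‖⁻¹) * ‖w ^ j‖ :=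
        mul_le_mul_of_nonneg_right (mul_le_mul_of_nonneg_left hgb (norm_nonneg _))
          (norm_nonneg _)
      refine hstep.trans (le_of_eq ?_)
      have h2 : ‖(2 : ℂ)‖ = 2 := by norm_num
      simp only [norm_div, norm_mul, norm_pow, mul_pow, h2, div_eq_mul_inv, norm_inv]
      ring
  refine tendsto_nhds_unique ?_ hdom
  exact (Tendsto.congr hps hprod)


set_option maxHeartbeats 1600000 in
/-- The core identity. -/
lemma core {z : ℂ} (hQ : ‖Q‖ < 1) (hz : ‖z‖ < 1) (u : ℤ → ℂ)
    (hu : Summable (fun m => ‖u m‖)) :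
    qPoch Q z * (∑' n : ℤ, ∑' j : ℕ, u (n + (j : ℤ)) * (z ^ j / P Q j)) = ∑' m : ℤ, u m := by
  have hu' : Summable u := hu.of_norm
  set v : ℕ → ℂ := fun j => z ^ j / P Q j with hv
  have hvr : ∀ j, v (j + 1) = v j * (z / (1 - Q ^ (j + 1))) := by
    intro j
    simp only [hv]
    rw [P_succ, pow_succ, div_mul_div_comm]
  have hvlim : Tendsto (fun j : ℕ => ‖z / (1 - Q ^ (j + 1))‖) atTop (𝓝 ‖z‖) := by
    have h : Tendsto (fun j : ℕ => z / (1 - Q ^ (j + 1))) atTop (𝓝 (z / 1)) :=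
      tendsto_const_nhds.div (tendsto_one_sub_pow hQ) one_ne_zero
    simpa using h.norm
  obtain ⟨hvn, hvs⟩ := summable_norm_of_mul_ratio v _ hvr hz hvlim
  set α : ℕ → ℂ := fun i => Q ^ tri i * (-z) ^ i / P Q i with hα
  have hαn : Summable (fun i => ‖α i‖) := (summable_coeff hQ (-z)).1
  have hPoch : qPoch Q z = ∑' i, α i := by
    rw [qPoch]
    have hcg : ∀ n : ℕ, 1 - Q ^ n * z = 1 + (-z) * Q ^ n := by intro n; ring
    rw [tprod_congr hcg, euler_prod hQ (-z)]
  have hprod2 : Summable (fun p : ℤ × ℕ => u p.1 * v p.2) :=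
    summable_mul_of_summable_norm hu hvn
  let e : ℤ × ℕ ≃ ℤ × ℕ :=
    { toFun := fun p => (p.1 + (p.2 : ℤ), p.2)
      invFun := fun p => (p.1 - (p.2 : ℤ), p.2)
      left_inv := fun p => by simp
      right_inv := fun p => by simp }
  have ht : Summable (fun p : ℤ × ℕ => u (p.1 + (p.2 : ℤ)) * v p.2) :=
    (Equiv.summable_iff e).2 hprod2
  have hiter : (∑' n : ℤ, ∑' j : ℕ, u (n + (j : ℤ)) * v j)
      = ∑' p : ℤ × ℕ, u (p.1 + (p.2 : ℤ)) * v p.2 := (Summable.tsum_prod ht).symm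
  have hswap : (∑' p : ℤ × ℕ, u (p.1 + (p.2 : ℤ)) * v p.2)
      = ∑' p : ℤ × ℕ, u p.1 * v p.2 := e.tsum_eq (fun p => u p.1 * v p.2)
  have hfact : (∑' p : ℤ × ℕ, u p.1 * v p.2) = (∑' m, u m) * (∑' j, v j) :=
    (tsum_mul_tsum_of_summable_norm hu hvn).symm
  have hcauchy : (∑' i, α i) * (∑' j, v j)
      = ∑' N : ℕ, ∑ p ∈ Finset.HasAntidiagonal.antidiagonal N, α p.1 * v p.2 :=
    tsum_mul_tsum_eq_tsum_sum_antidiagonal_of_summable_norm hαn hvn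
  have hδ : ∀ N : ℕ, (∑ p ∈ Finset.HasAntidiagonal.antidiagonal N, α p.1 * v p.2)
      = if N = 0 then 1 else 0 := by
    intro N
    rw [Finset.Nat.sum_antidiagonal_eq_sum_range_succ_mk]
    rcases Nat.eq_zero_or_pos N with rfl | hN
    · have htri0 : tri 0 = 0 := rfl
      simp [hα, hv, P_zero, htri0]
    · rw [if_neg (by omega)]
      have hterm : ∀ i ∈ Finset.range (N + 1),
          α i * v (N - i) = (z ^ N / P Q N) * (Q ^ tri i * gb Q N i * (-1 : ℂ) ^ i) := by
        intro i hi
        have hi' : i ≤ N := by have := Finset.mem_range.1 hi; omega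
        have hgbP := gb_mul_P hQ N i hi'
        have hzz : (-z) ^ i * z ^ (N - i) = (-1 : ℂ) ^ i * z ^ N := by
          rw [neg_pow, mul_assoc, ← pow_add]
          congr 2
          omega
        have hPi := P_ne_zero (Q := Q) hQ i
        have hPNi := P_ne_zero (Q := Q) hQ (N - i)
        have hPN := P_ne_zero (Q := Q) hQ N
        simp only [hα, hv]
        field_simp
        linear_combination (Q ^ tri i * P Q N) * hzz
          - (z ^ N * Q ^ tri i * (-1 : ℂ) ^ i) * hgbP
      rw [Finset.sum_congr rfl hterm, ← Finset.mul_sum, alt_sum_zero N hN, mul_zero]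
  have h1 : (∑' N : ℕ, if N = 0 then (1 : ℂ) else 0) = 1 := by
    rw [tsum_eq_single 0]
    · simp
    · intro b hb
      simp [hb]
  calc qPoch Q z * (∑' n : ℤ, ∑' j : ℕ, u (n + (j : ℤ)) * v j)
      = (∑' m, u m) * ((∑' i, α i) * (∑' j, v j)) := by
        rw [hiter, hswap, hfact, hPoch]; ring
    _ = (∑' m, u m) * 1 := by rw [hcauchy, tsum_congr hδ, h1]
    _ = ∑' m, u m := mul_one _

section MainAux

variable {q x : ℂ}

lemma sq_pow (a : ℂ) (k : ℕ) : (a ^ 2) ^ k = a ^ (2 * (k : ℤ)) := by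
  rw [← pow_mul, ← zpow_natCast a (2 * k)]
  congr 1

lemma zpow_pow (a : ℂ) (s : ℤ) (j : ℕ) : (a ^ s) ^ j = a ^ (s * (j : ℤ)) := by
  rw [← zpow_natCast (a ^ s) j, ← zpow_mul]

lemma tri_cast (j : ℕ) : 2 * (tri j : ℤ) + j = (j : ℤ) * j := by exact_mod_cast two_tri_add j

/-- The common reduction: expanding the twisted factor as a series. -/
lemma reduce (hqn : ‖q‖ < 1) (hq' : q ≠ 0) (hx' : x ≠ 0) (b : ℤ) (n : ℤ) :
    q ^ (n ^ 2 + b * n) * x ^ (2 * n + b) * qPochNegShift2 q (2 * n + 1 + b)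
      = ∑' j : ℕ, q ^ ((n + (j : ℤ)) ^ 2 + b * (n + (j : ℤ))) * x ^ (2 * (n + (j : ℤ)) + b)
          * ((x ^ (-2 : ℤ)) ^ j / P (q ^ 2) j) := by
  have hQ : ‖q ^ 2‖ < 1 := by
    rw [norm_pow]
    exact pow_lt_one₀ (norm_nonneg _) hqn (by norm_num)
  have hA : qPochNegShift2 q (2 * n + 1 + b)
      = ∏' k : ℕ, (1 + q ^ (2 * n + 1 + b) * (q ^ 2) ^ k) := by
    rw [qPochNegShift2]
    apply tprod_congr
    intro k
    rw [sq_pow, ← zpow_add₀ hq']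
  rw [hA, euler_prod hQ, ← tsum_mul_left]
  apply tsum_congr
  intro j
  have key : q ^ (n ^ 2 + b * n) * x ^ (2 * n + b)
        * ((q ^ 2) ^ tri j * (q ^ (2 * n + 1 + b)) ^ j)
      = q ^ ((n + (j : ℤ)) ^ 2 + b * (n + (j : ℤ))) * x ^ (2 * (n + (j : ℤ)) + b)
        * (x ^ (-2 : ℤ)) ^ j := by
    rw [sq_pow q (tri j), zpow_pow q _ j, zpow_pow x _ j]
    have r1 : q ^ ((n + (j : ℤ)) ^ 2 + b * (n + (j : ℤ)))
        = q ^ (n ^ 2 + b * n) * (q ^ (2 * (tri j : ℤ)) * q ^ ((2 * n + 1 + b) * (j : ℤ))) := by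
      rw [← zpow_add₀ hq', ← zpow_add₀ hq']
      congr 1
      linear_combination -tri_cast j
    have r2 : x ^ (2 * (n + (j : ℤ)) + b) = x ^ (2 * n + b) * x ^ (2 * (j : ℤ)) := by
      rw [← zpow_add₀ hx']
      congr 1
      ring
    have r3 : x ^ (2 * (j : ℤ)) * x ^ ((-2) * (j : ℤ)) = 1 := by
      rw [← zpow_add₀ hx', show 2 * (j : ℤ) + (-2) * (j : ℤ) = 0 from by ring, zpow_zero]
    rw [r1, r2]
    linear_combination -(q ^ (n ^ 2 + b * n) * x ^ (2 * n + b) * q ^ (2 * (tri j : ℤ))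
      * q ^ ((2 * n + 1 + b) * (j : ℤ))) * r3
  calc q ^ (n ^ 2 + b * n) * x ^ (2 * n + b)
        * ((q ^ 2) ^ tri j * (q ^ (2 * n + 1 + b)) ^ j / P (q ^ 2) j)
      = q ^ (n ^ 2 + b * n) * x ^ (2 * n + b)
          * ((q ^ 2) ^ tri j * (q ^ (2 * n + 1 + b)) ^ j) / P (q ^ 2) j := by ring
    _ = q ^ ((n + (j : ℤ)) ^ 2 + b * (n + (j : ℤ))) * x ^ (2 * (n + (j : ℤ)) + b)
          * (x ^ (-2 : ℤ)) ^ j / P (q ^ 2) j := by rw [key]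
    _ = _ := by ring

/-- Summability over `ℤ` of the bilateral theta-like series. -/
lemma summable_u (hqn : ‖q‖ < 1) (hq' : q ≠ 0) (hxn : 1 < ‖x‖) (b : ℤ) :
    Summable (fun m : ℤ => ‖q ^ (m ^ 2 + b * m) * x ^ (2 * m + b)‖) := by
  have hx' : x ≠ 0 := by
    intro h
    rw [h, norm_zero] at hxn
    linarith
  have hQ : ‖q ^ 2‖ < 1 := by
    rw [norm_pow]
    exact pow_lt_one₀ (norm_nonneg _) hqn (by norm_num)
  apply Summable.of_nat_of_neg
  · refine (summable_norm_of_mul_ratio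
      (fun n : ℕ => q ^ ((n : ℤ) ^ 2 + b * (n : ℤ)) * x ^ (2 * (n : ℤ) + b))
      (fun n : ℕ => (q ^ 2) ^ n * (q ^ (1 + b) * x ^ (2 : ℤ))) ?_ one_pos ?_).1
    · intro n
      have hq1 : q ^ (((n : ℤ) + 1) ^ 2 + b * ((n : ℤ) + 1))
          = q ^ ((n : ℤ) ^ 2 + b * (n : ℤ)) * (q ^ (2 * (n : ℤ)) * q ^ (1 + b)) := by
        rw [← zpow_add₀ hq', ← zpow_add₀ hq']
        congr 1
        ring
      have hx1 : x ^ (2 * ((n : ℤ) + 1) + b) = x ^ (2 * (n : ℤ) + b) * x ^ (2 : ℤ) := by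
        rw [← zpow_add₀ hx']
        congr 1
        ring
      push_cast
      rw [sq_pow q n, hq1, hx1]
      ring
    · have := ((tendsto_pow_atTop_nhds_zero_of_norm_lt_one hQ).mul_const
        (q ^ (1 + b) * x ^ (2 : ℤ))).norm
      simpa using this
  · refine (summable_norm_of_mul_ratio
      (fun n : ℕ => q ^ ((-(n : ℤ)) ^ 2 + b * (-(n : ℤ))) * x ^ (2 * (-(n : ℤ)) + b))
      (fun n : ℕ => (q ^ 2) ^ n * (q ^ (1 - b) * x ^ (-2 : ℤ))) ?_ one_pos ?_).1
    · intro n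
      have hq1 : q ^ ((-((n : ℤ) + 1)) ^ 2 + b * (-((n : ℤ) + 1)))
          = q ^ ((-(n : ℤ)) ^ 2 + b * (-(n : ℤ))) * (q ^ (2 * (n : ℤ)) * q ^ (1 - b)) := by
        rw [← zpow_add₀ hq', ← zpow_add₀ hq']
        congr 1
        ring
      have hx1 : x ^ (2 * (-((n : ℤ) + 1)) + b) = x ^ (2 * (-(n : ℤ)) + b) * x ^ (-2 : ℤ) := by
        rw [← zpow_add₀ hx']
        congr 1
        ring
      push_cast
      rw [sq_pow q n, hq1, hx1]
      ring
    · have := ((tendsto_pow_atTop_nhds_zero_of_norm_lt_one hQ).mul_const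
        (q ^ (1 - b) * x ^ (-2 : ℤ))).norm
      simpa using this

end MainAux

end TwistedRR

/-- Twisted two-variable Rogers–Ramanujan variation (Theorem 5.6). -/
theorem twisted_two_var_rogers_ramanujan_variation (q x : ℂ) (hq0 : 0 < ‖q‖)
    (hq1 : ‖q‖ < 1) (hx : 1 < ‖x‖) :
    qPoch (q ^ 2) (x ^ (-2 : ℤ)) *
        (∑' n : ℤ, q ^ (n ^ 2) * x ^ (2 * n) * qPochNegShift2 q (2 * n + 1)) =
      (∑' n : ℤ, q ^ (n ^ 2) * x ^ (2 * n)) ∧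
    qPoch (q ^ 2) (x ^ (-2 : ℤ)) *
        (∑' n : ℤ, q ^ (n ^ 2 + n) * x ^ (2 * n + 1) * qPochNegShift2 q (2 * n + 2)) =
      ∑' n : ℤ, q ^ (n ^ 2 + n) * x ^ (2 * n + 1) := by
  have hq' : q ≠ 0 := by
    intro h
    rw [h] at hq0
    simp at hq0
  have hqn : ‖q‖ < 1 := hq1
  have hxn : 1 < ‖x‖ := hx
  have hx' : x ≠ 0 := by
    intro h
    rw [h, norm_zero] at hxn
    linarith
  have hQ : ‖q ^ 2‖ < 1 := by
    rw [norm_pow]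
    exact pow_lt_one₀ (norm_nonneg _) hqn (by norm_num)
  have hz : ‖x ^ (-2 : ℤ)‖ < 1 := by
    rw [norm_zpow, zpow_neg]
    have h2 : (1 : ℝ) < ‖x‖ ^ (2 : ℤ) := by
      rw [show ((2 : ℤ)) = ((2 : ℕ) : ℤ) from rfl, zpow_natCast]
      nlinarith [hxn]
    rw [inv_lt_one₀ (by linarith)]
    exact h2
  constructor
  · have red : ∀ n : ℤ, q ^ (n ^ 2) * x ^ (2 * n) * qPochNegShift2 q (2 * n + 1)
        = ∑' j : ℕ, q ^ ((n + (j : ℤ)) ^ 2) * x ^ (2 * (n + (j : ℤ)))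
            * ((x ^ (-2 : ℤ)) ^ j / TwistedRR.P (q ^ 2) j) := by
      intro n
      have h := TwistedRR.reduce hqn hq' hx' 0 n
      simpa only [zero_mul, add_zero, mul_zero] using h
    rw [tsum_congr red]
    exact TwistedRR.core hQ hz (fun m : ℤ => q ^ (m ^ 2) * x ^ (2 * m))
      (by simpa only [zero_mul, add_zero, mul_zero] using
        TwistedRR.summable_u hqn hq' hxn 0)
  · have red : ∀ n : ℤ, q ^ (n ^ 2 + n) * x ^ (2 * n + 1) * qPochNegShift2 q (2 * n + 2)
        = ∑' j : ℕ, q ^ ((n + (j : ℤ)) ^ 2 + (n + (j : ℤ))) * x ^ (2 * (n + (j : ℤ)) + 1)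
            * ((x ^ (-2 : ℤ)) ^ j / TwistedRR.P (q ^ 2) j) := by
      intro n
      have h := TwistedRR.reduce hqn hq' hx' 1 n
      rw [show (2 * n + 1 + 1 : ℤ) = 2 * n + 2 from by ring] at h
      simpa only [one_mul] using h
    rw [tsum_congr red]
    exact TwistedRR.core hQ hz (fun m : ℤ => q ^ (m ^ 2 + m) * x ^ (2 * m + 1))
      (by simpa only [one_mul] using TwistedRR.summable_u hqn hq' hxn 1)

end
end

section
/- Change-of-basis identities (Theorem 5.12): let q, α, y ∈ ℂ with 0 < |q| < 1 and α ≠ 0, and let d ≥ 2 be an integer. Define d×d complex matrices U = (U_{k,ℓ}) and W = (W_{k,ℓ}) indexed by k, ℓ ∈ {0, 1, …, d−1} by U_{k,ℓ} := ∑_{n ≥ ε(k,ℓ)} αⁿ · q^{d·n(n−1)/2 + kn} · y^{dn+k−ℓ}/(q;q)_{dn+k−ℓ} and W_{k,ℓ} := ∑_{n ≥ ε(k,ℓ)} αⁿ · q^{(d(d−1)/2)·n² + (d(k−ℓ−1)+ℓ)·n + (k−ℓ)(k−ℓ−1)/2} · (−y)^{dn+k−ℓ}/(q;q)_{dn+k−ℓ},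 where ε(k,ℓ) := 1 if ℓ > k and ε(k,ℓ) := 0 otherwise (so every exponent dn+k−ℓ appearing is a nonnegative integer, and all series converge absolutely). Then det U = 1, det W = 1, and the product W·U equals the d×d identity matrix except that its (0, d−1) entry is −α·y·q^{−1} instead of 0 (for d = 2 this means W·U = [[1, −αy/q],[0, 1]]). -/
open scoped BigOperators

noncomputable section

/-- `ε(k,ℓ) = 1` if `ℓ > k`, else `0`. -/
def eps {d : ℕ} (k l : Fin d) : ℕ := if k < l then 1 else 0

/-- `U_{k,ℓ} := ∑_{n ≥ ε(k,ℓ)} αⁿ q^{d n(n−1)/2 + kn} y^{dn+k−ℓ}/(q;q)_{dn+k−ℓ}`,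
written as a sum over `n : ℕ` of the term at `n + ε(k,ℓ)`. -/
def Umat (q α y : ℂ) (d : ℕ) : Matrix (Fin d) (Fin d) ℂ :=
  Matrix.of fun k l =>
    ∑' n : ℕ,
      α ^ (n + eps k l) *
        q ^ (d * ((n + eps k l) * (n + eps k l - 1) / 2) + (k : ℕ) * (n + eps k l)) *
        y ^ (d * (n + eps k l) + (k : ℕ) - (l : ℕ)) /
        qPochFin q q (d * (n + eps k l) + (k : ℕ) - (l : ℕ))

/-- `W_{k,ℓ} := ∑_{n ≥ ε(k,ℓ)} αⁿ q^{(d(d−1)/2)n² + (d(k−ℓ−1)+ℓ)n + (k−ℓ)(k−ℓ−1)/2}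
(−y)^{dn+k−ℓ}/(q;q)_{dn+k−ℓ}`, written as a sum over `n : ℕ` of the term at `n + ε(k,ℓ)`. -/
def Wmat (q α y : ℂ) (d : ℕ) : Matrix (Fin d) (Fin d) ℂ :=
  Matrix.of fun k l =>
    ∑' n : ℕ,
      α ^ (n + eps k l) *
        q ^ (((d * (d - 1) / 2 : ℕ) : ℤ) * ((n + eps k l : ℕ) : ℤ) ^ 2 +
              ((d : ℤ) * (((k : ℕ) : ℤ) - ((l : ℕ) : ℤ) - 1) + ((l : ℕ) : ℤ)) *
                ((n + eps k l : ℕ) : ℤ) +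
              (((k : ℕ) : ℤ) - ((l : ℕ) : ℤ)) * ((((k : ℕ) : ℤ) - ((l : ℕ) : ℤ)) - 1) / 2) *
        (-y) ^ (d * (n + eps k l) + (k : ℕ) - (l : ℕ)) /
        qPochFin q q (d * (n + eps k l) + (k : ℕ) - (l : ℕ))

namespace CB

/-- U-term, with natural-number indices. -/
def ut (q α : ℂ) (d : ℕ) (y' : ℂ) (k l n : ℕ) : ℂ :=
  α ^ n * q ^ (d * (n * (n - 1) / 2) + k * n) * y' ^ (d * n + k - l) /
    qPochFin q q (d * n + k - l)

/-- W-exponent. -/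
def Zx (d k l : ℕ) (n : ℕ) : ℤ :=
  ((d * (d - 1) / 2 : ℕ) : ℤ) * (n : ℤ) ^ 2 +
    ((d : ℤ) * ((k : ℤ) - (l : ℤ) - 1) + (l : ℤ)) * (n : ℤ) +
    ((k : ℤ) - (l : ℤ)) * (((k : ℤ) - (l : ℤ)) - 1) / 2

/-- W-term. -/
def wt (q α : ℂ) (d : ℕ) (y' : ℂ) (k l n : ℕ) : ℂ :=
  α ^ n * q ^ (Zx d k l n) * (-y') ^ (d * n + k - l) / qPochFin q q (d * n + k - l)

section Poch

variable {q : ℂ}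

lemma Pq_zero : qPochFin q q 0 = 1 := by simp [qPochFin]

lemma Pq_succ (M : ℕ) : qPochFin q q (M + 1) = qPochFin q q M * (1 - q ^ (M + 1)) := by
  rw [qPochFin, Finset.prod_range_succ, ← qPochFin, pow_succ]

lemma one_sub_qpow_ne (hq1 : ‖q‖ < 1) (M : ℕ) : (1 : ℂ) - q ^ (M + 1) ≠ 0 := by
  intro h
  have h2 : q ^ (M + 1) = 1 := by linear_combination -h
  have : ‖q ^ (M + 1)‖ < 1 := by
    rw [norm_pow]
    calc ‖q‖ ^ (M + 1) ≤ ‖q‖ ^ 1 := by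
          apply pow_le_pow_of_le_one (norm_nonneg q) hq1.le; omega
      _ = ‖q‖ := pow_one _
      _ < 1 := hq1
  rw [h2, norm_one] at this
  exact lt_irrefl _ this

lemma Pq_ne (hq1 : ‖q‖ < 1) (M : ℕ) : qPochFin q q M ≠ 0 := by
  induction M with
  | zero => simp [Pq_zero]
  | succ n ih => rw [Pq_succ]; exact mul_ne_zero ih (one_sub_qpow_ne hq1 n)

lemma Pq_norm_ge (hq1 : ‖q‖ < 1) (M : ℕ) : (1 - ‖q‖) ^ M ≤ ‖qPochFin q q M‖ := by
  induction M with
  | zero => simp [Pq_zero]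
  | succ n ih =>
    rw [Pq_succ, norm_mul, pow_succ]
    have h1 : (1 : ℝ) - ‖q‖ ≤ ‖1 - q ^ (n + 1)‖ := by
      have := norm_sub_norm_le (1 : ℂ) (q ^ (n + 1))
      rw [norm_one, norm_pow] at this
      refine le_trans ?_ this
      have : ‖q‖ ^ (n + 1) ≤ ‖q‖ ^ 1 := by
        apply pow_le_pow_of_le_one (norm_nonneg q) hq1.le; omega
      simp only [pow_one] at this
      linarith
    have hq' : (0:ℝ) < 1 - ‖q‖ := by linarith [norm_nonneg q]
    have h0 : (0:ℝ) ≤ (1 - ‖q‖) ^ n := by positivity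
    calc (1 - ‖q‖) ^ n * (1 - ‖q‖) ≤ ‖qPochFin q q n‖ * ‖1 - q ^ (n + 1)‖ := by
          apply mul_le_mul ih h1 (by linarith) (norm_nonneg _)
      _ = _ := rfl

lemma Pq_norm_pos (hq1 : ‖q‖ < 1) (M : ℕ) : 0 < ‖qPochFin q q M‖ :=
  norm_pos_iff.mpr (Pq_ne hq1 M)

lemma Pq_inv_le (hq1 : ‖q‖ < 1) (M : ℕ) : ‖qPochFin q q M‖⁻¹ ≤ ((1 - ‖q‖) ^ M)⁻¹ := by
  have hq' : (0:ℝ) < 1 - ‖q‖ := by linarith [norm_nonneg q]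
  have h1 : (0:ℝ) < (1 - ‖q‖) ^ M := by positivity
  exact inv_anti₀ h1 (Pq_norm_ge hq1 M)

end Poch


section Majorant

variable {q α : ℂ} {d : ℕ}

/-- Real majorant for `ut`. -/
def mU (q α : ℂ) (d : ℕ) (Yb : ℝ) (k l n : ℕ) : ℝ :=
  ‖α‖ ^ n * ‖q‖ ^ (d * (n * (n - 1) / 2) + k * n) * Yb ^ (d * n + k - l) /
    (1 - ‖q‖) ^ (d * n + k - l)

/-- Real majorant for `wt`. -/
def mW (q α : ℂ) (d : ℕ) (Yb : ℝ) (k l n : ℕ) : ℝ :=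
  ‖α‖ ^ n * ‖q‖ ^ (Zx d k l n) * Yb ^ (d * n + k - l) / (1 - ‖q‖) ^ (d * n + k - l)

lemma mU_nonneg (hq1 : ‖q‖ < 1) {Yb : ℝ} (hYb : 0 ≤ Yb) (k l n : ℕ) :
    0 ≤ mU q α d Yb k l n := by
  have hq' : (0:ℝ) < 1 - ‖q‖ := by linarith [norm_nonneg q]
  unfold mU; positivity

lemma mW_nonneg (hq1 : ‖q‖ < 1) {Yb : ℝ} (hYb : 0 ≤ Yb) (k l n : ℕ) :
    0 ≤ mW q α d Yb k l n := by
  have hq' : (0:ℝ) < 1 - ‖q‖ := by linarith [norm_nonneg q]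
  unfold mW; positivity

lemma ut_le_mU (hq1 : ‖q‖ < 1) {y' : ℂ} {Yb : ℝ} (hy : ‖y'‖ ≤ Yb) (k l n : ℕ) :
    ‖ut q α d y' k l n‖ ≤ mU q α d Yb k l n := by
  have hq' : (0:ℝ) < 1 - ‖q‖ := by linarith [norm_nonneg q]
  have hYb : 0 ≤ Yb := (norm_nonneg _).trans hy
  rw [ut, mU, norm_div, norm_mul, norm_mul, norm_pow, norm_pow, norm_pow]
  apply div_le_div₀ (by positivity) ?_ (by positivity) (Pq_norm_ge hq1 _)
  apply mul_le_mul_of_nonneg_left (pow_le_pow_left₀ (norm_nonneg _) hy _) (by positivity)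

lemma wt_le_mW (hq1 : ‖q‖ < 1) {y' : ℂ} {Yb : ℝ} (hy : ‖y'‖ ≤ Yb) (k l n : ℕ) :
    ‖wt q α d y' k l n‖ ≤ mW q α d Yb k l n := by
  have hq' : (0:ℝ) < 1 - ‖q‖ := by linarith [norm_nonneg q]
  have hYb : 0 ≤ Yb := (norm_nonneg _).trans hy
  rw [wt, mW, norm_div, norm_mul, norm_mul, norm_pow, norm_zpow, norm_pow, norm_neg]
  apply div_le_div₀ (by positivity) ?_ (by positivity) (Pq_norm_ge hq1 _)
  apply mul_le_mul_of_nonneg_left (pow_le_pow_left₀ (norm_nonneg _) hy _) ?_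
  have : (0:ℝ) ≤ ‖q‖ ^ (Zx d k l n) := by positivity
  positivity

lemma C2_succ (n : ℕ) : (n + 1) * ((n + 1) - 1) / 2 = n * (n - 1) / 2 + n := by
  have hb : (n + 1) * ((n + 1) - 1) = n * (n - 1) + 2 * n := by
    cases n with
    | zero => rfl
    | succ m => simp only [Nat.add_sub_cancel]; ring
  omega

lemma mU_succ (hq1 : ‖q‖ < 1) {Yb : ℝ} (k l n : ℕ) (hn : l ≤ d * n + k) :
    mU q α d Yb k l (n + 1) =
      mU q α d Yb k l n * (‖α‖ * ‖q‖ ^ (d * n + k) * Yb ^ d / (1 - ‖q‖) ^ d) := by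
  have e0 : d * ((n + 1) * ((n + 1) - 1) / 2) + k * (n + 1) =
      (d * (n * (n - 1) / 2) + k * n) + (d * n + k) := by
    rw [C2_succ]; ring
  have hd' : d * (n + 1) = d * n + d := by ring
  have e1 : d * (n + 1) + k - l = (d * n + k - l) + d := by omega
  rw [mU, mU, e0, e1, pow_add, pow_add, pow_add, pow_succ]
  ring

lemma Zx_succ (d k l n : ℕ) :
    Zx d k l (n + 1) = Zx d k l n +
      (((d * (d - 1) / 2 : ℕ) : ℤ) * (2 * (n : ℤ) + 1) +
        ((d : ℤ) * ((k : ℤ) - (l : ℤ) - 1) + (l : ℤ))) := by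
  rw [Zx, Zx]; push_cast; ring

lemma mW_succ (hq0 : q ≠ 0) (hq1 : ‖q‖ < 1) {Yb : ℝ} (k l n : ℕ) (hn : l ≤ d * n + k) :
    mW q α d Yb k l (n + 1) =
      mW q α d Yb k l n *
        (‖α‖ * ‖q‖ ^ (((d * (d - 1) / 2 : ℕ) : ℤ) * (2 * (n : ℤ) + 1) +
            ((d : ℤ) * ((k : ℤ) - (l : ℤ) - 1) + (l : ℤ))) * Yb ^ d / (1 - ‖q‖) ^ d) := by
  have hq'' : ‖q‖ ≠ 0 := norm_ne_zero_iff.mpr hq0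
  have hd' : d * (n + 1) = d * n + d := by ring
  have e1 : d * (n + 1) + k - l = (d * n + k - l) + d := by omega
  rw [mW, mW, Zx_succ, zpow_add₀ hq'', e1, pow_add, pow_add, pow_succ]
  ring

lemma eventually_const_mul_pow_le {C r : ℝ} (hC : 0 ≤ C) (hr0 : 0 ≤ r) (hr1 : r < 1)
    {d : ℕ} (hd : 1 ≤ d) :
    ∀ᶠ n in Filter.atTop, C * r ^ (d * n) ≤ 1 / 2 := by
  obtain ⟨m, hm⟩ := exists_pow_lt_of_lt_one (x := 1 / (2 * (C + 1))) (by positivity) hr1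
  filter_upwards [Filter.eventually_ge_atTop m] with n hn
  have h1 : r ^ (d * n) ≤ r ^ m := by
    apply pow_le_pow_of_le_one hr0 hr1.le
    calc m ≤ n := hn
      _ ≤ d * n := by nlinarith
  have h2 : C * r ^ (d * n) ≤ C * r ^ m := by
    apply mul_le_mul_of_nonneg_left h1 hC
  have h3 : C * r ^ m ≤ C * (1 / (2 * (C + 1))) := by
    apply mul_le_mul_of_nonneg_left hm.le hC
  have h4 : C * (1 / (2 * (C + 1))) ≤ 1 / 2 := by
    rw [mul_one_div, div_le_div_iff₀ (by positivity) (by norm_num : (0:ℝ) < 2)]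
    nlinarith
  linarith

lemma summable_mU (hq1 : ‖q‖ < 1) (hd : 1 ≤ d) {Yb : ℝ} (hYb : 0 ≤ Yb) (k l : ℕ) :
    Summable (mU q α d Yb k l) := by
  have hq' : (0:ℝ) < 1 - ‖q‖ := by linarith [norm_nonneg q]
  set C : ℝ := ‖α‖ * Yb ^ d / (1 - ‖q‖) ^ d with hCdef
  have hC : 0 ≤ C := by positivity
  apply summable_of_ratio_norm_eventually_le (r := 1 / 2) (by norm_num)
  have hev := eventually_const_mul_pow_le (C := C) hC (norm_nonneg q) hq1 hd
  filter_upwards [hev, Filter.eventually_ge_atTop l] with n h1 h2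
  have hn : l ≤ d * n + k := le_trans h2 (by nlinarith)
  rw [Real.norm_of_nonneg (mU_nonneg hq1 hYb k l _),
      Real.norm_of_nonneg (mU_nonneg hq1 hYb k l _), mU_succ hq1 k l n hn]
  have key : ‖α‖ * ‖q‖ ^ (d * n + k) * Yb ^ d / (1 - ‖q‖) ^ d ≤ 1 / 2 := by
    have hqk : ‖q‖ ^ (d * n + k) ≤ ‖q‖ ^ (d * n) := by
      apply pow_le_pow_of_le_one (norm_nonneg q) hq1.le; omega
    calc ‖α‖ * ‖q‖ ^ (d * n + k) * Yb ^ d / (1 - ‖q‖) ^ d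
        ≤ ‖α‖ * ‖q‖ ^ (d * n) * Yb ^ d / (1 - ‖q‖) ^ d := by gcongr
      _ = C * ‖q‖ ^ (d * n) := by rw [hCdef]; ring
      _ ≤ 1 / 2 := h1
  calc mU q α d Yb k l n * (‖α‖ * ‖q‖ ^ (d * n + k) * Yb ^ d / (1 - ‖q‖) ^ d)
      ≤ mU q α d Yb k l n * (1 / 2) := by
        apply mul_le_mul_of_nonneg_left key (mU_nonneg hq1 hYb k l n)
    _ = 1 / 2 * mU q α d Yb k l n := by ring

lemma summable_mW (hq0 : q ≠ 0) (hq1 : ‖q‖ < 1) (hd : 2 ≤ d) {Yb : ℝ} (hYb : 0 ≤ Yb)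
    {k l : ℕ} (hk : k ≤ d) (hl : l ≤ d) :
    Summable (mW q α d Yb k l) := by
  have hq' : (0:ℝ) < 1 - ‖q‖ := by linarith [norm_nonneg q]
  have hQ0 : (0:ℝ) < ‖q‖ := norm_pos_iff.mpr hq0
  -- bound the exponent increment from below
  set D : ℤ := ((d * (d - 1) / 2 : ℕ) : ℤ) with hD
  have hD1 : 1 ≤ D := by
    rw [hD]
    have : 1 ≤ d * (d - 1) / 2 := by
      have : 2 ≤ d * (d - 1) := by nlinarith [Nat.sub_le d 1, Nat.le_sub_one_of_lt hd]
      omega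
    exact_mod_cast this
  set B : ℤ := (d : ℤ) * ((k : ℤ) - (l : ℤ) - 1) + (l : ℤ) with hB
  have hBlow : -(d : ℤ) * (d + 1) ≤ B := by
    rw [hB]
    have hk' : (0:ℤ) ≤ (k:ℤ) := Int.ofNat_nonneg k
    have hl' : (0:ℤ) ≤ (l:ℤ) := Int.ofNat_nonneg l
    have hl'' : (l:ℤ) ≤ (d:ℤ) := by exact_mod_cast hl
    nlinarith [Int.ofNat_nonneg d]
  set c : ℤ := (d : ℤ) * (d + 1) + 1 with hc
  set C : ℝ := ‖α‖ * ‖q‖ ^ (-c) * Yb ^ d / (1 - ‖q‖) ^ d with hCdef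
  have hC : 0 ≤ C := by positivity
  apply summable_of_ratio_norm_eventually_le (r := 1 / 2) (by norm_num)
  have hev := eventually_const_mul_pow_le (C := C) hC (norm_nonneg q) hq1 (by omega : 1 ≤ 1)
  simp only [one_mul] at hev
  filter_upwards [hev, Filter.eventually_ge_atTop l] with n h1 h2
  have hn : l ≤ d * n + k := le_trans h2 (by nlinarith)
  rw [Real.norm_of_nonneg (mW_nonneg hq1 hYb k l _),
      Real.norm_of_nonneg (mW_nonneg hq1 hYb k l _), mW_succ hq0 hq1 k l n hn]
  have hinc : (n : ℤ) - c ≤ D * (2 * (n : ℤ) + 1) + B := by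
    have hn0 : (0:ℤ) ≤ (n:ℤ) := Int.ofNat_nonneg n
    nlinarith
  have key : ‖α‖ * ‖q‖ ^ (D * (2 * (n : ℤ) + 1) + B) * Yb ^ d / (1 - ‖q‖) ^ d ≤ 1 / 2 := by
    have hqz : ‖q‖ ^ (D * (2 * (n : ℤ) + 1) + B) ≤ ‖q‖ ^ ((n : ℤ) - c) :=
      zpow_le_zpow_right_of_le_one₀ hQ0 hq1.le hinc
    have hsplit : ‖q‖ ^ ((n : ℤ) - c) = ‖q‖ ^ (n : ℕ) * ‖q‖ ^ (-c) := by
      rw [sub_eq_add_neg, zpow_add₀ (ne_of_gt hQ0), zpow_natCast]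
    calc ‖α‖ * ‖q‖ ^ (D * (2 * (n : ℤ) + 1) + B) * Yb ^ d / (1 - ‖q‖) ^ d
        ≤ ‖α‖ * ‖q‖ ^ ((n : ℤ) - c) * Yb ^ d / (1 - ‖q‖) ^ d := by gcongr
      _ = C * ‖q‖ ^ n := by rw [hCdef, hsplit]; ring
      _ ≤ 1 / 2 := h1
  calc mW q α d Yb k l n *
        (‖α‖ * ‖q‖ ^ (D * (2 * (n : ℤ) + 1) + B) * Yb ^ d / (1 - ‖q‖) ^ d)
      ≤ mW q α d Yb k l n * (1 / 2) := by
        apply mul_le_mul_of_nonneg_left key (mW_nonneg hq1 hYb k l n)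
    _ = 1 / 2 * mW q α d Yb k l n := by ring

lemma summable_ut (hq1 : ‖q‖ < 1) (hd : 1 ≤ d) (y' : ℂ) (k l e : ℕ) :
    Summable (fun n => ut q α d y' k l (n + e)) := by
  apply Summable.of_norm_bounded (g := fun n => mU q α d (max ‖y'‖ 1) k l (n + e))
  · exact (summable_nat_add_iff e).mpr
      (summable_mU hq1 hd (le_trans zero_le_one (le_max_right _ _)) k l)
  · intro n
    exact ut_le_mU hq1 (le_max_left _ _) k l (n + e)

lemma summable_wt (hq0 : q ≠ 0) (hq1 : ‖q‖ < 1) (hd : 2 ≤ d) (y' : ℂ)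
    {k l : ℕ} (hk : k ≤ d) (hl : l ≤ d) (e : ℕ) :
    Summable (fun n => wt q α d y' k l (n + e)) := by
  apply Summable.of_norm_bounded (g := fun n => mW q α d (max ‖y'‖ 1) k l (n + e))
  · exact (summable_nat_add_iff e).mpr
      (summable_mW hq0 hq1 hd (le_trans zero_le_one (le_max_right _ _)) hk hl)
  · intro n
    exact wt_le_mW hq1 (le_max_left _ _) k l (n + e)

end Majorant



section Scalar

variable {q α : ℂ} {d : ℕ}

lemma int_c2_double (u : ℤ) : 2 * (u * (u - 1) / 2) = u * (u - 1) := by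
  obtain ⟨t, ht⟩ := Int.even_mul_succ_self (u - 1)
  have h1 : u * (u - 1) = 2 * t := by linear_combination ht
  rw [h1, Int.mul_ediv_cancel_left _ two_ne_zero]

lemma Zx_double (d k l n : ℕ) :
    2 * Zx d k l n = ((d * (d - 1) / 2 : ℕ) : ℤ) * 2 * (n : ℤ) ^ 2 +
      2 * ((d : ℤ) * ((k : ℤ) - (l : ℤ) - 1) + (l : ℤ)) * (n : ℤ) +
      ((k : ℤ) - (l : ℤ)) * (((k : ℤ) - (l : ℤ)) - 1) := by
  have h := int_c2_double ((k : ℤ) - (l : ℤ))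
  rw [Zx]
  ring_nf
  ring_nf at h
  linarith

lemma Dq_double {d : ℕ} (hd : 1 ≤ d) :
    (((d * (d - 1) / 2 : ℕ)) : ℤ) * 2 = (d : ℤ) * ((d : ℤ) - 1) := by
  obtain ⟨m, rfl⟩ : ∃ m, d = m + 1 := ⟨d - 1, by omega⟩
  have h : Even ((m + 1) * m) := by simpa [mul_comm] using Nat.even_mul_succ_self m
  have hN : (m + 1) * ((m + 1) - 1) / 2 * 2 = (m + 1) * ((m + 1) - 1) := by
    simp only [Nat.add_sub_cancel]
    exact Nat.div_mul_cancel h.two_dvd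
  have hN' : (((m + 1) * ((m + 1) - 1) / 2 : ℕ) : ℤ) * 2 = (((m + 1) * ((m + 1) - 1) : ℕ) : ℤ) := by
    exact_mod_cast hN
  rw [hN']
  push_cast [Nat.add_sub_cancel]
  ring

lemma Zx_shift_k (d k l n : ℕ) :
    Zx d (k + 1) l n = Zx d k l n + ((d : ℤ) * (n : ℤ) + (k : ℤ) - (l : ℤ)) := by
  apply mul_left_cancel₀ (two_ne_zero (α := ℤ))
  rw [mul_add, Zx_double, Zx_double]
  push_cast
  ring

lemma Zx_wrap {d : ℕ} (hd : 2 ≤ d) (l n : ℕ) :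
    Zx d (d - 1) l n = Zx d 0 l (n + 1) + 1 := by
  apply mul_left_cancel₀ (two_ne_zero (α := ℤ))
  rw [mul_add, Zx_double, Zx_double]
  have hD := Dq_double (by omega : 1 ≤ d)
  have hcast : (((d - 1 : ℕ)) : ℤ) = (d : ℤ) - 1 := by
    have : 1 ≤ d := by omega
    push_cast [this]; ring
  rw [hcast]
  have hn1 : ((n + 1 : ℕ) : ℤ) = (n : ℤ) + 1 := by push_cast; ring
  rw [hn1, Nat.cast_zero]
  linear_combination (-(2 * (n : ℤ) + 1)) * hD

-- head terms
lemma ut_diag_zero (q α : ℂ) (d : ℕ) (y' : ℂ) (k : ℕ) : ut q α d y' k k 0 = 1 := by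
  have h : d * 0 + k - k = 0 := by omega
  rw [ut, h, Pq_zero]
  norm_num

lemma wt_diag_zero (q α : ℂ) (d : ℕ) (y' : ℂ) (k : ℕ) : wt q α d y' k k 0 = 1 := by
  have h : d * 0 + k - k = 0 := by omega
  have hz : Zx d k k 0 = 0 := by simp [Zx]
  rw [wt, h, hz, Pq_zero]
  norm_num

-- the main U column step
lemma ut_step (hq1 : ‖q‖ < 1) (y' : ℂ) (k l n : ℕ) (h : l + 1 ≤ d * n + k) :
    ut q α d (q * y') k l n = ut q α d y' k l n - y' * ut q α d y' k (l + 1) n := by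
  obtain ⟨M, hM⟩ : ∃ M, d * n + k - l = M + 1 := ⟨d * n + k - l - 1, by omega⟩
  have hM2 : d * n + k - (l + 1) = M := by omega
  rw [ut, ut, ut, hM, hM2, Pq_succ, mul_pow]
  have h1 : qPochFin q q M ≠ 0 := Pq_ne hq1 M
  have h2 : (1 : ℂ) - q ^ (M + 1) ≠ 0 := one_sub_qpow_ne hq1 M
  field_simp
  ring

-- the U wrap (last column) step
lemma ut_wrap (hq1 : ‖q‖ < 1) (y' : ℂ) (k n : ℕ) (hd : 2 ≤ d) (hk : k + 1 ≤ d) :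
    ut q α d y' k (d - 1) (n + 1) - ut q α d (q * y') k (d - 1) (n + 1) =
      α * y' * ut q α d (q * y') k 0 n := by
  have hdn : d * (n + 1) = d * n + d := by ring
  have hM : d * (n + 1) + k - (d - 1) = (d * n + k) + 1 := by omega
  have hM0 : d * n + k - 0 = d * n + k := by omega
  have hE : d * ((n + 1) * ((n + 1) - 1) / 2) + k * (n + 1) =
      (d * (n * (n - 1) / 2) + k * n) + (d * n + k) := by
    rw [C2_succ]; ring
  rw [ut, ut, ut, hM, hM0, hE, Pq_succ, mul_pow]
  have h1 : qPochFin q q (d * n + k) ≠ 0 := Pq_ne hq1 _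
  have h2 : (1 : ℂ) - q ^ ((d * n + k) + 1) ≠ 0 := one_sub_qpow_ne hq1 _
  field_simp
  ring

-- the main W row step
lemma wt_step (hq0 : q ≠ 0) (hq1 : ‖q‖ < 1) (y' : ℂ) (k l n : ℕ) (h : l ≤ d * n + k) :
    wt q α d y' (k + 1) l n =
      wt q α d (q * y') (k + 1) l n - y' * wt q α d (q * y') k l n := by
  obtain ⟨M, hM⟩ : ∃ M, d * n + k - l = M := ⟨d * n + k - l, rfl⟩
  have hM1 : d * n + (k + 1) - l = M + 1 := by omega
  have hcast : ((d : ℤ) * (n : ℤ) + (k : ℤ) - (l : ℤ)) = (M : ℤ) := by push_cast; omega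
  rw [wt, wt, wt, hM1, hM, Zx_shift_k, hcast, zpow_add₀ hq0, zpow_natCast, Pq_succ]
  have h1 : qPochFin q q M ≠ 0 := Pq_ne hq1 M
  have h2 : (1 : ℂ) - q ^ (M + 1) ≠ 0 := one_sub_qpow_ne hq1 M
  have hneg : -(q * y') = q * (-y') := by ring
  rw [hneg, mul_pow, mul_pow]
  field_simp
  ring

-- the W wrap (row 0) step
lemma wt_wrap (hq0 : q ≠ 0) (hq1 : ‖q‖ < 1) (y' : ℂ) (l n : ℕ) (hd : 2 ≤ d) (hl : l + 1 ≤ d) :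
    wt q α d y' 0 l (n + 1) - wt q α d (q * y') 0 l (n + 1) =
      -(α * y' / q) * wt q α d y' (d - 1) l n := by
  have hdn : d * (n + 1) = d * n + d := by ring
  obtain ⟨M, hM⟩ : ∃ M, d * n + (d - 1) - l = M := ⟨_, rfl⟩
  have hM1 : d * (n + 1) + 0 - l = M + 1 := by omega
  rw [wt, wt, wt, hM1, hM, Zx_wrap hd, Pq_succ]
  set Z : ℤ := Zx d 0 l (n + 1) with hZ
  have h1 : qPochFin q q M ≠ 0 := Pq_ne hq1 M
  have h2 : (1 : ℂ) - q ^ (M + 1) ≠ 0 := one_sub_qpow_ne hq1 M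
  have hneg : -(q * y') = q * (-y') := by ring
  rw [hneg, mul_pow, zpow_add₀ hq0, zpow_one]
  field_simp
  ring

end Scalar



section Entry

variable {q α : ℂ} {d : ℕ}

/-- Entry function for `U`. -/
def Ue (q α : ℂ) (d : ℕ) (y' : ℂ) (k l : ℕ) : ℂ :=
  ∑' n : ℕ, ut q α d y' k l (n + (if k < l then 1 else 0))

/-- Entry function for `W`. -/
def We (q α : ℂ) (d : ℕ) (y' : ℂ) (k l : ℕ) : ℂ :=
  ∑' n : ℕ, wt q α d y' k l (n + (if k < l then 1 else 0))

lemma Ue_of_ge (y' : ℂ) {k l : ℕ} (h : l ≤ k) :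
    Ue q α d y' k l = ∑' n : ℕ, ut q α d y' k l n := by
  rw [Ue]; simp [Nat.not_lt.mpr h]

lemma Ue_of_lt (y' : ℂ) {k l : ℕ} (h : k < l) :
    Ue q α d y' k l = ∑' n : ℕ, ut q α d y' k l (n + 1) := by
  rw [Ue]; simp [h]

lemma We_of_ge (y' : ℂ) {k l : ℕ} (h : l ≤ k) :
    We q α d y' k l = ∑' n : ℕ, wt q α d y' k l n := by
  rw [We]; simp [Nat.not_lt.mpr h]

lemma We_of_lt (y' : ℂ) {k l : ℕ} (h : k < l) :
    We q α d y' k l = ∑' n : ℕ, wt q α d y' k l (n + 1) := by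
  rw [We]; simp [h]

lemma summable_ut0 (hq1 : ‖q‖ < 1) (hd : 1 ≤ d) (y' : ℂ) (k l : ℕ) :
    Summable (fun n => ut q α d y' k l n) := by
  have := summable_ut (α := α) hq1 hd y' k l 0
  simpa using this

lemma summable_wt0 (hq0 : q ≠ 0) (hq1 : ‖q‖ < 1) (hd : 2 ≤ d) (y' : ℂ)
    {k l : ℕ} (hk : k ≤ d) (hl : l ≤ d) :
    Summable (fun n => wt q α d y' k l n) := by
  have := summable_wt (α := α) hq0 hq1 hd y' hk hl 0
  simpa using this

/-- Column step identity for `U`, columns `l` with `l+1 < d`. -/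
lemma entry_A1 (hq1 : ‖q‖ < 1) (hd : 2 ≤ d) (y' : ℂ) {k l : ℕ}
    (hk : k < d) (hl : l + 1 < d) :
    Ue q α d (q * y') k l = Ue q α d y' k l - y' * Ue q α d y' k (l + 1) := by
  have hd1 : (1:ℕ) ≤ d := by omega
  rcases lt_trichotomy k l with hkl | rfl | hkl
  · rw [Ue_of_lt _ hkl, Ue_of_lt _ hkl, Ue_of_lt _ (by omega : k < l + 1),
      ← tsum_mul_left,
      ← Summable.tsum_sub (summable_ut hq1 hd1 y' k l 1)
        ((summable_ut hq1 hd1 y' k (l + 1) 1).mul_left y')]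
    exact tsum_congr fun n => ut_step hq1 y' k l (n + 1) (by nlinarith)
  · rw [Ue_of_ge _ (le_refl k), Ue_of_ge _ (le_refl k), Ue_of_lt _ (by omega : k < k + 1)]
    rw [Summable.tsum_eq_zero_add (summable_ut0 hq1 hd1 (q * y') k k),
        Summable.tsum_eq_zero_add (summable_ut0 hq1 hd1 y' k k), ut_diag_zero, ut_diag_zero]
    have key : (∑' n : ℕ, ut q α d (q * y') k k (n + 1)) =
        (∑' n : ℕ, ut q α d y' k k (n + 1)) - y' * ∑' n : ℕ, ut q α d y' k (k + 1) (n + 1) := by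
      rw [← tsum_mul_left,
        ← Summable.tsum_sub (summable_ut hq1 hd1 y' k k 1)
          ((summable_ut hq1 hd1 y' k (k + 1) 1).mul_left y')]
      exact tsum_congr fun n => ut_step hq1 y' k k (n + 1) (by nlinarith)
    rw [key]; ring
  · rw [Ue_of_ge _ hkl.le, Ue_of_ge _ hkl.le, Ue_of_ge _ (by omega : l + 1 ≤ k),
      ← tsum_mul_left,
      ← Summable.tsum_sub (summable_ut0 hq1 hd1 y' k l)
        ((summable_ut0 hq1 hd1 y' k (l + 1)).mul_left y')]
    exact tsum_congr fun n => ut_step hq1 y' k l n (by nlinarith)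

/-- Last-column identity for `U`. -/
lemma entry_A2 (hq1 : ‖q‖ < 1) (hd : 2 ≤ d) (y' : ℂ) {k : ℕ} (hk : k < d) :
    Ue q α d y' k (d - 1) =
      Ue q α d (q * y') k (d - 1) + α * y' * Ue q α d (q * y') k 0 := by
  have hd1 : (1:ℕ) ≤ d := by omega
  rcases eq_or_lt_of_le (by omega : k ≤ d - 1) with hkd | hkd
  · -- k = d - 1
    rw [Ue_of_ge _ (le_of_eq hkd.symm), Ue_of_ge _ (le_of_eq hkd.symm),
        Ue_of_ge _ (Nat.zero_le k)]
    rw [Summable.tsum_eq_zero_add (summable_ut0 hq1 hd1 y' k (d - 1)),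
        Summable.tsum_eq_zero_add (summable_ut0 hq1 hd1 (q * y') k (d - 1))]
    rw [show d - 1 = k from hkd.symm, ut_diag_zero, ut_diag_zero]
    have key : (∑' n : ℕ, ut q α d y' k k (n + 1)) -
        (∑' n : ℕ, ut q α d (q * y') k k (n + 1)) =
        (α * y') * ∑' n : ℕ, ut q α d (q * y') k 0 n := by
      rw [← tsum_mul_left,
        ← Summable.tsum_sub (summable_ut hq1 hd1 y' k k 1)
          (summable_ut hq1 hd1 (q * y') k k 1)]
      refine tsum_congr fun n => ?_
      have := ut_wrap (α := α) hq1 y' k n hd (by omega)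
      rw [show d - 1 = k from hkd.symm] at this
      exact this
    linear_combination key
  · -- k < d - 1
    rw [Ue_of_lt _ hkd, Ue_of_lt _ hkd, Ue_of_ge _ (Nat.zero_le k)]
    have key : (∑' n : ℕ, ut q α d y' k (d - 1) (n + 1)) -
        (∑' n : ℕ, ut q α d (q * y') k (d - 1) (n + 1)) =
        (α * y') * ∑' n : ℕ, ut q α d (q * y') k 0 n := by
      rw [← tsum_mul_left,
        ← Summable.tsum_sub (summable_ut hq1 hd1 y' k (d - 1) 1)
          (summable_ut hq1 hd1 (q * y') k (d - 1) 1)]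
      exact tsum_congr fun n => ut_wrap hq1 y' k n hd (by omega)
    linear_combination key

/-- Row step identity for `W`, rows `k+1 ≤ d-1`. -/
lemma entry_B1 (hq0 : q ≠ 0) (hq1 : ‖q‖ < 1) (hd : 2 ≤ d) (y' : ℂ) {k l : ℕ}
    (hk : k + 2 ≤ d) (hl : l < d) :
    We q α d y' (k + 1) l =
      We q α d (q * y') (k + 1) l - y' * We q α d (q * y') k l := by
  have hkd : k + 1 ≤ d := by omega
  have hkd' : k ≤ d := by omega
  have hld : l ≤ d := by omega
  rcases lt_trichotomy l (k + 1) with hkl | rfl | hkl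
  · -- l ≤ k
    have hlk : l ≤ k := by omega
    rw [We_of_ge _ (by omega : l ≤ k + 1), We_of_ge _ (by omega : l ≤ k + 1),
      We_of_ge _ hlk, ← tsum_mul_left,
      ← Summable.tsum_sub (summable_wt0 hq0 hq1 hd (q * y') hkd hld)
        ((summable_wt0 hq0 hq1 hd (q * y') hkd' hld).mul_left y')]
    exact tsum_congr fun n => wt_step hq0 hq1 y' k l n (by nlinarith)
  · -- l = k + 1
    rw [We_of_ge _ (le_refl (k + 1)), We_of_ge _ (le_refl (k + 1)),
      We_of_lt _ (by omega : k < k + 1)]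
    rw [Summable.tsum_eq_zero_add (summable_wt0 hq0 hq1 hd y' hkd hld),
        Summable.tsum_eq_zero_add (summable_wt0 hq0 hq1 hd (q * y') hkd hld),
        wt_diag_zero, wt_diag_zero]
    have key : (∑' n : ℕ, wt q α d y' (k + 1) (k + 1) (n + 1)) =
        (∑' n : ℕ, wt q α d (q * y') (k + 1) (k + 1) (n + 1)) -
          y' * ∑' n : ℕ, wt q α d (q * y') k (k + 1) (n + 1) := by
      rw [← tsum_mul_left,
        ← Summable.tsum_sub (summable_wt hq0 hq1 hd (q * y') hkd hld 1)
          ((summable_wt hq0 hq1 hd (q * y') hkd' hld 1).mul_left y')]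
      exact tsum_congr fun n => wt_step hq0 hq1 y' k (k + 1) (n + 1) (by nlinarith)
    rw [key]; ring
  · -- l > k + 1
    rw [We_of_lt _ hkl, We_of_lt _ hkl, We_of_lt _ (by omega : k < l), ← tsum_mul_left,
      ← Summable.tsum_sub (summable_wt hq0 hq1 hd (q * y') hkd hld 1)
        ((summable_wt hq0 hq1 hd (q * y') hkd' hld 1).mul_left y')]
    exact tsum_congr fun n => wt_step hq0 hq1 y' k l (n + 1) (by nlinarith)

/-- Row 0 identity for `W`. -/
lemma entry_B2 (hq0 : q ≠ 0) (hq1 : ‖q‖ < 1) (hd : 2 ≤ d) (y' : ℂ) {l : ℕ} (hl : l < d) :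
    We q α d (q * y') 0 l =
      We q α d y' 0 l + (α * y' / q) * We q α d y' (d - 1) l := by
  have hld : l ≤ d := by omega
  have h0d : (0:ℕ) ≤ d := by omega
  have hd1d : d - 1 ≤ d := by omega
  have hwd : ¬ (d - 1 < l) := by omega
  rcases Nat.eq_zero_or_pos l with rfl | hl1
  · rw [We_of_ge _ (le_refl 0), We_of_ge _ (le_refl 0), We_of_ge _ (by omega : 0 ≤ d - 1)]
    rw [Summable.tsum_eq_zero_add (summable_wt0 hq0 hq1 hd (q * y') (by omega) hld),
        Summable.tsum_eq_zero_add (summable_wt0 hq0 hq1 hd y' (by omega) hld),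
        wt_diag_zero, wt_diag_zero]
    have key : (∑' n : ℕ, wt q α d y' 0 0 (n + 1)) -
        (∑' n : ℕ, wt q α d (q * y') 0 0 (n + 1)) =
        (-(α * y' / q)) * ∑' n : ℕ, wt q α d y' (d - 1) 0 n := by
      rw [← tsum_mul_left,
        ← Summable.tsum_sub (summable_wt hq0 hq1 hd y' (by omega) hld 1)
          (summable_wt hq0 hq1 hd (q * y') (by omega) hld 1)]
      exact tsum_congr fun n => wt_wrap hq0 hq1 y' 0 n hd (by omega)
    linear_combination -key
  · rw [We_of_lt _ hl1, We_of_lt _ hl1, We_of_ge _ (by omega : l ≤ d - 1)]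
    have key : (∑' n : ℕ, wt q α d y' 0 l (n + 1)) -
        (∑' n : ℕ, wt q α d (q * y') 0 l (n + 1)) =
        (-(α * y' / q)) * ∑' n : ℕ, wt q α d y' (d - 1) l n := by
      rw [← tsum_mul_left,
        ← Summable.tsum_sub (summable_wt hq0 hq1 hd y' (by omega) hld 1)
          (summable_wt hq0 hq1 hd (q * y') (by omega) hld 1)]
      exact tsum_congr fun n => wt_wrap hq0 hq1 y' l n hd (by omega)
    linear_combination -key

end Entry



section Tail

variable {q α : ℂ} {d : ℕ}

lemma pow_peel {a Yb : ℝ} (ha : 0 ≤ a) (h : a ≤ Yb) (hYb : 1 ≤ Yb) {M : ℕ} (hM : 1 ≤ M) :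
    a ^ M ≤ a * Yb ^ M := by
  obtain ⟨M', rfl⟩ : ∃ M', M = M' + 1 := ⟨M - 1, by omega⟩
  have h0Y : (0:ℝ) ≤ Yb := by linarith
  calc a ^ (M' + 1) = a * a ^ M' := by ring
    _ ≤ a * Yb ^ M' := mul_le_mul_of_nonneg_left (pow_le_pow_left₀ ha h M') ha
    _ ≤ a * Yb ^ (M' + 1) := by
        apply mul_le_mul_of_nonneg_left ?_ ha
        calc Yb ^ M' = 1 * Yb ^ M' := (one_mul _).symm
          _ ≤ Yb * Yb ^ M' := mul_le_mul_of_nonneg_right hYb (by positivity)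
          _ = Yb ^ (M' + 1) := by ring

lemma ut_le_mU_peel (hq1 : ‖q‖ < 1) {y' : ℂ} {Yb : ℝ} (hy : ‖y'‖ ≤ Yb) (hYb : 1 ≤ Yb)
    (k l n : ℕ) (hM : 1 ≤ d * n + k - l) :
    ‖ut q α d y' k l n‖ ≤ mU q α d Yb k l n * ‖y'‖ := by
  have hq' : (0:ℝ) < 1 - ‖q‖ := by linarith [norm_nonneg q]
  have hYb0 : (0:ℝ) ≤ Yb := by linarith
  rw [ut, mU, norm_div, norm_mul, norm_mul, norm_pow, norm_pow, norm_pow]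
  calc ‖α‖ ^ n * ‖q‖ ^ (d * (n * (n - 1) / 2) + k * n) * ‖y'‖ ^ (d * n + k - l) /
        ‖qPochFin q q (d * n + k - l)‖
      ≤ ‖α‖ ^ n * ‖q‖ ^ (d * (n * (n - 1) / 2) + k * n) *
          (‖y'‖ * Yb ^ (d * n + k - l)) / (1 - ‖q‖) ^ (d * n + k - l) := by
        apply div_le_div₀ (by positivity) ?_ (by positivity) (Pq_norm_ge hq1 _)
        exact mul_le_mul_of_nonneg_left (pow_peel (norm_nonneg _) hy hYb hM) (by positivity)
    _ = ‖α‖ ^ n * ‖q‖ ^ (d * (n * (n - 1) / 2) + k * n) * Yb ^ (d * n + k - l) /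
          (1 - ‖q‖) ^ (d * n + k - l) * ‖y'‖ := by ring

lemma wt_le_mW_peel (hq1 : ‖q‖ < 1) {y' : ℂ} {Yb : ℝ} (hy : ‖y'‖ ≤ Yb) (hYb : 1 ≤ Yb)
    (k l n : ℕ) (hM : 1 ≤ d * n + k - l) :
    ‖wt q α d y' k l n‖ ≤ mW q α d Yb k l n * ‖y'‖ := by
  have hq' : (0:ℝ) < 1 - ‖q‖ := by linarith [norm_nonneg q]
  have hYb0 : (0:ℝ) ≤ Yb := by linarith
  have hqz : (0:ℝ) ≤ ‖q‖ ^ (Zx d k l n) := by positivity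
  rw [wt, mW, norm_div, norm_mul, norm_mul, norm_pow, norm_zpow, norm_pow, norm_neg]
  calc ‖α‖ ^ n * ‖q‖ ^ (Zx d k l n) * ‖y'‖ ^ (d * n + k - l) /
        ‖qPochFin q q (d * n + k - l)‖
      ≤ ‖α‖ ^ n * ‖q‖ ^ (Zx d k l n) *
          (‖y'‖ * Yb ^ (d * n + k - l)) / (1 - ‖q‖) ^ (d * n + k - l) := by
        apply div_le_div₀ (by positivity) ?_ (by positivity) (Pq_norm_ge hq1 _)
        exact mul_le_mul_of_nonneg_left (pow_peel (norm_nonneg _) hy hYb hM) (by positivity)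
    _ = ‖α‖ ^ n * ‖q‖ ^ (Zx d k l n) * Yb ^ (d * n + k - l) /
          (1 - ‖q‖) ^ (d * n + k - l) * ‖y'‖ := by ring

lemma tsum_ut_peel (hq1 : ‖q‖ < 1) (hd : 1 ≤ d) (k l e : ℕ)
    (hM : ∀ n : ℕ, 1 ≤ d * (n + e) + k - l) {Yb : ℝ} (hYb : 1 ≤ Yb)
    {y' : ℂ} (hy : ‖y'‖ ≤ Yb) :
    ‖∑' n : ℕ, ut q α d y' k l (n + e)‖ ≤
      (∑' n : ℕ, mU q α d Yb k l (n + e)) * ‖y'‖ := by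
  have hYb0 : (0:ℝ) ≤ Yb := by linarith
  have hmsum : Summable (fun n => mU q α d Yb k l (n + e)) :=
    (summable_nat_add_iff e).mpr (summable_mU hq1 hd hYb0 k l)
  have hnsum : Summable (fun n => ‖ut q α d y' k l (n + e)‖) :=
    Summable.of_nonneg_of_le (fun n => norm_nonneg _)
      (fun n => ut_le_mU hq1 hy k l (n + e)) hmsum
  calc ‖∑' n : ℕ, ut q α d y' k l (n + e)‖ ≤ ∑' n : ℕ, ‖ut q α d y' k l (n + e)‖ :=
        norm_tsum_le_tsum_norm hnsum
    _ ≤ ∑' n : ℕ, (mU q α d Yb k l (n + e)) * ‖y'‖ := by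
        apply Summable.tsum_le_tsum (fun n => ut_le_mU_peel hq1 hy hYb k l (n + e) (hM n)) hnsum
        exact hmsum.mul_right _
    _ = (∑' n : ℕ, mU q α d Yb k l (n + e)) * ‖y'‖ := tsum_mul_right

lemma tsum_wt_peel (hq0 : q ≠ 0) (hq1 : ‖q‖ < 1) (hd : 2 ≤ d) {k l : ℕ}
    (hk : k ≤ d) (hl : l ≤ d) (e : ℕ)
    (hM : ∀ n : ℕ, 1 ≤ d * (n + e) + k - l) {Yb : ℝ} (hYb : 1 ≤ Yb)
    {y' : ℂ} (hy : ‖y'‖ ≤ Yb) :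
    ‖∑' n : ℕ, wt q α d y' k l (n + e)‖ ≤
      (∑' n : ℕ, mW q α d Yb k l (n + e)) * ‖y'‖ := by
  have hYb0 : (0:ℝ) ≤ Yb := by linarith
  have hmsum : Summable (fun n => mW q α d Yb k l (n + e)) :=
    (summable_nat_add_iff e).mpr (summable_mW hq0 hq1 hd hYb0 hk hl)
  have hnsum : Summable (fun n => ‖wt q α d y' k l (n + e)‖) :=
    Summable.of_nonneg_of_le (fun n => norm_nonneg _)
      (fun n => wt_le_mW hq1 hy k l (n + e)) hmsum
  calc ‖∑' n : ℕ, wt q α d y' k l (n + e)‖ ≤ ∑' n : ℕ, ‖wt q α d y' k l (n + e)‖ :=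
        norm_tsum_le_tsum_norm hnsum
    _ ≤ ∑' n : ℕ, (mW q α d Yb k l (n + e)) * ‖y'‖ := by
        apply Summable.tsum_le_tsum (fun n => wt_le_mW_peel hq1 hy hYb k l (n + e) (hM n)) hnsum
        exact hmsum.mul_right _
    _ = (∑' n : ℕ, mW q α d Yb k l (n + e)) * ‖y'‖ := tsum_mul_right

/-- Quantitative bound for `Ue` entries near `y' = 0`. -/
lemma Ue_delta_bound (hq1 : ‖q‖ < 1) (hd : 2 ≤ d) {k l : ℕ} (hk : k < d) (hl : l < d)
    {Yb : ℝ} (hYb : 1 ≤ Yb) {y' : ℂ} (hy : ‖y'‖ ≤ Yb) :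
    ‖Ue q α d y' k l - (if k = l then 1 else 0)‖ ≤
      (∑' n : ℕ, mU q α d Yb k l (n + (if k ≤ l then 1 else 0))) * ‖y'‖ := by
  have hd1 : (1:ℕ) ≤ d := by omega
  have hdm : ∀ n : ℕ, d ≤ d * (n + 1) := fun n => Nat.le_mul_of_pos_right d (by omega)
  rcases lt_trichotomy k l with hkl | rfl | hkl
  · rw [if_neg (by omega), if_pos (by omega), sub_zero, Ue_of_lt _ hkl]
    exact tsum_ut_peel hq1 hd1 k l 1 (fun n => by have := hdm n; omega) hYb hy
  · rw [if_pos rfl, if_pos (le_refl k), Ue_of_ge _ (le_refl k),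
      Summable.tsum_eq_zero_add (summable_ut0 hq1 hd1 y' k k), ut_diag_zero, add_sub_cancel_left]
    exact tsum_ut_peel hq1 hd1 k k 1 (fun n => by have := hdm n; omega) hYb hy
  · rw [if_neg (by omega), if_neg (by omega), sub_zero, Ue_of_ge _ hkl.le]
    have h := tsum_ut_peel (α := α) hq1 hd1 k l 0 (fun n => by
      have : d * n + k - l = d * (n + 0) + k - l := by norm_num
      omega) hYb hy
    simpa using h
  
/-- Quantitative bound for `We` entries near `y' = 0`. -/
lemma We_delta_bound (hq0 : q ≠ 0) (hq1 : ‖q‖ < 1) (hd : 2 ≤ d) {k l : ℕ}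
    (hk : k < d) (hl : l < d)
    {Yb : ℝ} (hYb : 1 ≤ Yb) {y' : ℂ} (hy : ‖y'‖ ≤ Yb) :
    ‖We q α d y' k l - (if k = l then 1 else 0)‖ ≤
      (∑' n : ℕ, mW q α d Yb k l (n + (if k ≤ l then 1 else 0))) * ‖y'‖ := by
  have hkd : k ≤ d := by omega
  have hld : l ≤ d := by omega
  have hdm : ∀ n : ℕ, d ≤ d * (n + 1) := fun n => Nat.le_mul_of_pos_right d (by omega)
  rcases lt_trichotomy k l with hkl | rfl | hkl
  · rw [if_neg (by omega), if_pos (by omega), sub_zero, We_of_lt _ hkl]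
    exact tsum_wt_peel hq0 hq1 hd hkd hld 1 (fun n => by have := hdm n; omega) hYb hy
  · rw [if_pos rfl, if_pos (le_refl k), We_of_ge _ (le_refl k),
      Summable.tsum_eq_zero_add (summable_wt0 hq0 hq1 hd y' hkd hld), wt_diag_zero,
      add_sub_cancel_left]
    exact tsum_wt_peel hq0 hq1 hd hkd hld 1 (fun n => by have := hdm n; omega) hYb hy
  · rw [if_neg (by omega), if_neg (by omega), sub_zero, We_of_ge _ hkl.le]
    have h := tsum_wt_peel (α := α) hq0 hq1 hd hkd hld 0 (fun n => by
      have : d * n + k - l = d * (n + 0) + k - l := by norm_num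
      omega) hYb hy
    simpa using h

end Tail

section EntryCorrespondence

lemma Umat_apply' (q α y : ℂ) (d : ℕ) (k l : Fin d) :
    Umat q α y d k l = Ue q α d y (k : ℕ) (l : ℕ) := by
  rw [Umat, Ue]
  rfl

lemma Wmat_apply' (q α y : ℂ) (d : ℕ) (k l : Fin d) :
    Wmat q α y d k l = We q α d y (k : ℕ) (l : ℕ) := by
  rw [Wmat, We]
  rfl

end EntryCorrespondence



section MatrixIdent

variable {q α : ℂ} {d : ℕ}

/-- Subdiagonal shift matrix. -/
def Nl (d : ℕ) : Matrix (Fin d) (Fin d) ℂ :=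
  Matrix.of fun k l => if (k : ℕ) = (l : ℕ) + 1 then 1 else 0

/-- Corner matrix `E_{0,d-1}`. -/
def Em (d : ℕ) (hd : 2 ≤ d) : Matrix (Fin d) (Fin d) ℂ :=
  Matrix.single (⟨0, Nat.lt_of_lt_of_le (by norm_num) hd⟩ : Fin d)
    (⟨d - 1, Nat.sub_lt (Nat.lt_of_lt_of_le (by norm_num) hd) Nat.one_pos⟩ : Fin d) (1 : ℂ)

lemma sum_if_eq {β : Type*} [AddCommMonoid β] (f : Fin d → β) (m : ℕ) :
    (∑ j : Fin d, if (j : ℕ) = m then f j else 0) = if h : m < d then f ⟨m, h⟩ else 0 := by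
  by_cases h : m < d
  · rw [dif_pos h, Finset.sum_eq_single (⟨m, h⟩ : Fin d)]
    · rw [if_pos rfl]
    · intro b _ hb
      rw [if_neg]
      intro hbv; exact hb (Fin.ext hbv)
    · intro hmem; exact absurd (Finset.mem_univ _) hmem
  · rw [dif_neg h]
    apply Finset.sum_eq_zero
    intro j _
    rw [if_neg]
    intro hj; exact h (hj ▸ j.isLt)

lemma mul_Nl_apply (A : Matrix (Fin d) (Fin d) ℂ) (k l : Fin d) :
    (A * Nl d) k l = if h : (l : ℕ) + 1 < d then A k ⟨(l : ℕ) + 1, h⟩ else 0 := by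
  rw [Matrix.mul_apply]
  simp only [Nl, Matrix.of_apply, mul_ite, mul_one, mul_zero]
  exact sum_if_eq (fun j => A k j) ((l : ℕ) + 1)

lemma Nl_mul_apply (A : Matrix (Fin d) (Fin d) ℂ) (k l : Fin d) :
    (Nl d * A) k l =
      if h : 1 ≤ (k : ℕ) then A ⟨(k : ℕ) - 1, by omega⟩ l else 0 := by
  rw [Matrix.mul_apply]
  simp only [Nl, Matrix.of_apply, ite_mul, one_mul, zero_mul]
  by_cases hk : 1 ≤ (k : ℕ)
  · rw [dif_pos hk]
    have step : ∀ j : Fin d,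
        (if (k : ℕ) = (j : ℕ) + 1 then A j l else 0) =
          (if (j : ℕ) = (k : ℕ) - 1 then A j l else 0) := by
      intro j
      apply if_congr (by omega) rfl rfl
    rw [Finset.sum_congr rfl (fun j _ => step j), sum_if_eq (fun j => A j l) ((k : ℕ) - 1),
      dif_pos (by omega : (k : ℕ) - 1 < d)]
  · rw [dif_neg hk]
    apply Finset.sum_eq_zero
    intro j _
    rw [if_neg (by omega)]

/-- Matrix identity (A): `U(y)·T(y) = U(qy)·(1 + αy E)`. -/
lemma matA (hq1 : ‖q‖ < 1) (hd : 2 ≤ d) (y' : ℂ) :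
    Umat q α y' d * (1 - y' • Nl d) =
      Umat q α (q * y') d * (1 + (α * y') • Em d hd) := by
  ext k l
  rw [Matrix.mul_sub, Matrix.mul_one, Matrix.mul_smul, Matrix.mul_add, Matrix.mul_one,
    Matrix.mul_smul, Matrix.sub_apply, Matrix.add_apply, Matrix.smul_apply,
    Matrix.smul_apply, mul_Nl_apply, smul_eq_mul, smul_eq_mul]
  by_cases hlast : (l : ℕ) = d - 1
  · have hl : l = (⟨d - 1, by omega⟩ : Fin d) := Fin.ext hlast
    rw [dif_neg (by omega : ¬ (l : ℕ) + 1 < d), mul_zero, sub_zero, hl, Em,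
      Matrix.mul_single_apply_same, mul_one,
      Umat_apply', Umat_apply', Umat_apply']
    have h2 := entry_A2 (α := α) hq1 hd y' (k := (k : ℕ)) k.isLt
    simpa using h2
  · have hlt : (l : ℕ) + 1 < d := by have := l.isLt; omega
    have hne : l ≠ (⟨d - 1, by omega⟩ : Fin d) := by
      intro hcon
      exact hlast (by rw [hcon])
    rw [dif_pos hlt, Em, Matrix.mul_single_apply_of_ne (hbj := hne),
      mul_zero, add_zero, Umat_apply', Umat_apply', Umat_apply']
    have h1 := entry_A1 (α := α) hq1 hd y' (k := (k : ℕ)) (l := (l : ℕ)) k.isLt hlt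
    simpa using h1.symm

/-- Matrix identity (B): `(1 + (αy/q) E)·W(y) = T(y)·W(qy)`. -/
lemma matB (hq0 : q ≠ 0) (hq1 : ‖q‖ < 1) (hd : 2 ≤ d) (y' : ℂ) :
    (1 + (α * y' / q) • Em d hd) * Wmat q α y' d =
      (1 - y' • Nl d) * Wmat q α (q * y') d := by
  ext k l
  rw [Matrix.add_mul, Matrix.one_mul, Matrix.smul_mul, Matrix.sub_mul, Matrix.one_mul,
    Matrix.smul_mul, Matrix.add_apply, Matrix.sub_apply, Matrix.smul_apply,
    Matrix.smul_apply, Nl_mul_apply, smul_eq_mul, smul_eq_mul]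
  by_cases hk0 : (k : ℕ) = 0
  · have hk : k = (⟨0, by omega⟩ : Fin d) := Fin.ext hk0
    rw [dif_neg (by omega), mul_zero, sub_zero, hk, Em,
      Matrix.single_mul_apply_same, one_mul,
      Wmat_apply', Wmat_apply', Wmat_apply']
    have h2 := entry_B2 (α := α) hq0 hq1 hd y' (l := (l : ℕ)) l.isLt
    simpa using h2.symm
  · have hk1 : 1 ≤ (k : ℕ) := by omega
    have hne : k ≠ (⟨0, by omega⟩ : Fin d) := by
      intro hcon
      exact hk0 (by rw [hcon])
    rw [dif_pos hk1, Em, Matrix.single_mul_apply_of_ne (h := hne),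
      mul_zero, add_zero, Wmat_apply', Wmat_apply', Wmat_apply']
    obtain ⟨k0, hk0'⟩ : ∃ k0, (k : ℕ) = k0 + 1 := ⟨(k : ℕ) - 1, by omega⟩
    have hcoe : ((⟨(k : ℕ) - 1, by omega⟩ : Fin d) : ℕ) = k0 := by simp [hk0']
    rw [hcoe, hk0']
    have h1 := entry_B1 (α := α) hq0 hq1 hd y' (k := k0) (l := (l : ℕ))
      (by have := k.isLt; omega) l.isLt
    simpa using h1

lemma det_one_sub_Nl (y' : ℂ) : ((1 : Matrix (Fin d) (Fin d) ℂ) - y' • Nl d).det = 1 := by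
  have h : ((1 : Matrix (Fin d) (Fin d) ℂ) - y' • Nl d).BlockTriangular OrderDual.toDual := by
    intro i j hij
    have hij' : (i : ℕ) < (j : ℕ) := hij
    rw [Matrix.sub_apply, Matrix.smul_apply, Matrix.one_apply_ne
      (Fin.ne_of_val_ne (by omega)), Nl, Matrix.of_apply, if_neg (by omega), smul_eq_mul,
      mul_zero, sub_zero]
  rw [Matrix.det_of_lowerTriangular _ h]
  apply Finset.prod_eq_one
  intro i _
  rw [Matrix.sub_apply, Matrix.smul_apply, Matrix.one_apply_eq, Nl, Matrix.of_apply,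
    if_neg (by omega), smul_eq_mul, mul_zero, sub_zero]

lemma det_one_add_Em (hd : 2 ≤ d) (c : ℂ) :
    ((1 : Matrix (Fin d) (Fin d) ℂ) + c • Em d hd).det = 1 := by
  have h : ((1 : Matrix (Fin d) (Fin d) ℂ) + c • Em d hd).BlockTriangular id := by
    intro i j hij
    have hij' : (j : ℕ) < (i : ℕ) := hij
    rw [Matrix.add_apply, Matrix.smul_apply, Matrix.one_apply_ne
      (Fin.ne_of_val_ne (by omega)), Em, Matrix.single_apply_of_ne, smul_eq_mul,
      mul_zero, add_zero]
    rintro ⟨h1, h2⟩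
    have hv1 : (i : ℕ) = 0 := (congrArg Fin.val h1).symm
    have hv2 : (j : ℕ) = d - 1 := (congrArg Fin.val h2).symm
    omega
  rw [Matrix.det_of_upperTriangular h]
  apply Finset.prod_eq_one
  intro i _
  rw [Matrix.add_apply, Matrix.smul_apply, Matrix.one_apply_eq, Em,
    Matrix.single_apply_of_ne, smul_eq_mul, mul_zero, add_zero]
  rintro ⟨h1, h2⟩
  have : (0 : ℕ) = d - 1 := congrArg Fin.val (h1.trans h2.symm)
  omega

lemma Em_mul_Em (hd : 2 ≤ d) : Em d hd * Em d hd = 0 := by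
  apply Matrix.single_mul_single_of_ne
  intro hcon
  have h0 : d - 1 = 0 := congrArg Fin.val hcon
  omega

lemma one_add_Em_mul_one_sub_Em (hd : 2 ≤ d) (c : ℂ) :
    ((1 : Matrix (Fin d) (Fin d) ℂ) + c • Em d hd) * (1 - c • Em d hd) = 1 := by
  have h := Em_mul_Em (d := d) hd
  simp only [mul_sub, mul_add, sub_mul, add_mul, mul_one, one_mul, Matrix.smul_mul,
    Matrix.mul_smul, h, smul_zero]
  abel

lemma one_sub_Em_mul_one_add_Em (hd : 2 ≤ d) (c : ℂ) :
    ((1 : Matrix (Fin d) (Fin d) ℂ) - c • Em d hd) * (1 + c • Em d hd) = 1 := by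
  have h := Em_mul_Em (d := d) hd
  simp only [mul_sub, mul_add, sub_mul, add_mul, mul_one, one_mul, Matrix.smul_mul,
    Matrix.mul_smul, h, smul_zero]
  abel

/-- Explicit inverse of `T(y)`. -/
def Tinv (d : ℕ) (y' : ℂ) : Matrix (Fin d) (Fin d) ℂ :=
  Matrix.of fun k l => if (l : ℕ) ≤ (k : ℕ) then y' ^ ((k : ℕ) - (l : ℕ)) else 0

lemma T_mul_Tinv (y' : ℂ) :
    ((1 : Matrix (Fin d) (Fin d) ℂ) - y' • Nl d) * Tinv d y' = 1 := by
  ext k l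
  rw [Matrix.sub_mul, Matrix.one_mul, Matrix.smul_mul, Matrix.sub_apply, Matrix.smul_apply,
    Nl_mul_apply, smul_eq_mul, Matrix.one_apply]
  by_cases hk : 1 ≤ (k : ℕ)
  · rw [dif_pos hk]
    simp only [Tinv, Matrix.of_apply]
    rcases lt_trichotomy (k : ℕ) (l : ℕ) with h | h | h
    · rw [if_neg (by omega), if_neg (by omega), if_neg (Fin.ne_of_val_ne (by omega)),
        mul_zero, sub_zero]
    · rw [if_pos (by omega), if_neg (by omega), if_pos (Fin.ext h : k = l),
        mul_zero, sub_zero, show (k : ℕ) - (l : ℕ) = 0 by omega, pow_zero]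
    · rw [if_pos (by omega), if_pos (by omega), if_neg (Fin.ne_of_val_ne (by omega)),
        show (k : ℕ) - (l : ℕ) = ((k : ℕ) - 1 - (l : ℕ)) + 1 by omega, pow_succ]
      ring
  · have hk0 : (k : ℕ) = 0 := by omega
    rw [dif_neg hk]
    simp only [Tinv, Matrix.of_apply]
    rcases Nat.eq_zero_or_pos (l : ℕ) with h | h
    · rw [if_pos (by omega), if_pos (Fin.ext (by omega) : k = l),
        show (k : ℕ) - (l : ℕ) = 0 by omega, pow_zero, mul_zero, sub_zero]
    · rw [if_neg (by omega), if_neg (Fin.ne_of_val_ne (by omega)), mul_zero, sub_zero]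

end MatrixIdent



section Det

open Filter

variable {q α : ℂ} {d : ℕ}

lemma detU_step (hq1 : ‖q‖ < 1) (hd : 2 ≤ d) (y' : ℂ) :
    (Umat q α y' d).det = (Umat q α (q * y') d).det := by
  have h := congrArg Matrix.det (matA (α := α) hq1 hd y')
  rw [Matrix.det_mul, Matrix.det_mul, det_one_sub_Nl, det_one_add_Em] at h
  simpa using h

lemma detW_step (hq0 : q ≠ 0) (hq1 : ‖q‖ < 1) (hd : 2 ≤ d) (y' : ℂ) :
    (Wmat q α y' d).det = (Wmat q α (q * y') d).det := by
  have h := congrArg Matrix.det (matB (α := α) hq0 hq1 hd y')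
  rw [Matrix.det_mul, Matrix.det_mul, det_one_sub_Nl, det_one_add_Em] at h
  simpa using h

lemma detU_pow (hq1 : ‖q‖ < 1) (hd : 2 ≤ d) (y : ℂ) (N : ℕ) :
    (Umat q α y d).det = (Umat q α (q ^ N * y) d).det := by
  induction N with
  | zero => norm_num
  | succ n ih =>
    rw [ih, detU_step hq1 hd (q ^ n * y), show q * (q ^ n * y) = q ^ (n + 1) * y by ring]

lemma detW_pow (hq0 : q ≠ 0) (hq1 : ‖q‖ < 1) (hd : 2 ≤ d) (y : ℂ) (N : ℕ) :
    (Wmat q α y d).det = (Wmat q α (q ^ N * y) d).det := by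
  induction N with
  | zero => norm_num
  | succ n ih =>
    rw [ih, detW_step hq0 hq1 hd (q ^ n * y), show q * (q ^ n * y) = q ^ (n + 1) * y by ring]

lemma norm_qpow_mul_le (hq1 : ‖q‖ < 1) (y : ℂ) (N : ℕ) : ‖q ^ N * y‖ ≤ max ‖y‖ 1 := by
  rw [norm_mul, norm_pow]
  calc ‖q‖ ^ N * ‖y‖ ≤ 1 * ‖y‖ := by
        apply mul_le_mul_of_nonneg_right (pow_le_one₀ (norm_nonneg q) hq1.le) (norm_nonneg y)
    _ = ‖y‖ := one_mul _
    _ ≤ max ‖y‖ 1 := le_max_left _ _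

lemma norm_qpow_mul_tendsto (hq1 : ‖q‖ < 1) (y : ℂ) (C : ℝ) :
    Tendsto (fun N : ℕ => C * ‖q ^ N * y‖) atTop (nhds 0) := by
  have h1 : Tendsto (fun N : ℕ => ‖q‖ ^ N) atTop (nhds 0) :=
    tendsto_pow_atTop_nhds_zero_of_lt_one (norm_nonneg q) hq1
  have h2 : Tendsto (fun N : ℕ => C * (‖q‖ ^ N * ‖y‖)) atTop (nhds (C * (0 * ‖y‖))) :=
    ((h1.mul_const ‖y‖).const_mul C)
  simp only [zero_mul, mul_zero] at h2
  convert h2 using 2 with N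
  rw [norm_mul, norm_pow]

lemma Ue_tendsto (hq1 : ‖q‖ < 1) (hd : 2 ≤ d) (y : ℂ) {k l : ℕ} (hk : k < d) (hl : l < d) :
    Tendsto (fun N : ℕ => Ue q α d (q ^ N * y) k l) atTop
      (nhds (if k = l then 1 else 0)) := by
  have hYb : (1:ℝ) ≤ max ‖y‖ 1 := le_max_right _ _
  rw [tendsto_iff_norm_sub_tendsto_zero]
  apply squeeze_zero_norm (a := fun N : ℕ =>
    (∑' n : ℕ, mU q α d (max ‖y‖ 1) k l (n + (if k ≤ l then 1 else 0))) * ‖q ^ N * y‖)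
  · intro N
    rw [norm_norm]
    exact Ue_delta_bound (α := α) hq1 hd hk hl hYb (norm_qpow_mul_le hq1 y N)
  · exact norm_qpow_mul_tendsto hq1 y _

lemma We_tendsto (hq0 : q ≠ 0) (hq1 : ‖q‖ < 1) (hd : 2 ≤ d) (y : ℂ) {k l : ℕ}
    (hk : k < d) (hl : l < d) :
    Tendsto (fun N : ℕ => We q α d (q ^ N * y) k l) atTop
      (nhds (if k = l then 1 else 0)) := by
  have hYb : (1:ℝ) ≤ max ‖y‖ 1 := le_max_right _ _
  rw [tendsto_iff_norm_sub_tendsto_zero]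
  apply squeeze_zero_norm (a := fun N : ℕ =>
    (∑' n : ℕ, mW q α d (max ‖y‖ 1) k l (n + (if k ≤ l then 1 else 0))) * ‖q ^ N * y‖)
  · intro N
    rw [norm_norm]
    exact We_delta_bound (α := α) hq0 hq1 hd hk hl hYb (norm_qpow_mul_le hq1 y N)
  · exact norm_qpow_mul_tendsto hq1 y _

lemma Umat_tendsto (hq1 : ‖q‖ < 1) (hd : 2 ≤ d) (y : ℂ) :
    Tendsto (fun N : ℕ => Umat q α (q ^ N * y) d) atTop
      (nhds (1 : Matrix (Fin d) (Fin d) ℂ)) := by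
  refine tendsto_pi_nhds.mpr ?_
  intro k
  rw [tendsto_pi_nhds]
  intro l
  have h := Ue_tendsto (α := α) hq1 hd y k.isLt l.isLt
  simp only [Umat_apply']
  rw [Matrix.one_apply]
  have hiff : (k = l) ↔ ((k : ℕ) = (l : ℕ)) := ⟨fun h' => by rw [h'], Fin.ext⟩
  rw [if_congr hiff rfl rfl]
  exact h

lemma Wmat_tendsto (hq0 : q ≠ 0) (hq1 : ‖q‖ < 1) (hd : 2 ≤ d) (y : ℂ) :
    Tendsto (fun N : ℕ => Wmat q α (q ^ N * y) d) atTop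
      (nhds (1 : Matrix (Fin d) (Fin d) ℂ)) := by
  refine tendsto_pi_nhds.mpr ?_
  intro k
  rw [tendsto_pi_nhds]
  intro l
  have h := We_tendsto (α := α) hq0 hq1 hd y k.isLt l.isLt
  simp only [Wmat_apply']
  rw [Matrix.one_apply]
  have hiff : (k = l) ↔ ((k : ℕ) = (l : ℕ)) := ⟨fun h' => by rw [h'], Fin.ext⟩
  rw [if_congr hiff rfl rfl]
  exact h

lemma detU_eq_one (hq1 : ‖q‖ < 1) (hd : 2 ≤ d) (y : ℂ) : (Umat q α y d).det = 1 := by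
  have hdet : (fun N : ℕ => (Umat q α y d).det) =
      (fun N : ℕ => (Umat q α (q ^ N * y) d).det) :=
    funext fun N => detU_pow hq1 hd y N
  have hcont : Tendsto (fun N : ℕ => (Umat q α (q ^ N * y) d).det) atTop
      (nhds ((1 : Matrix (Fin d) (Fin d) ℂ).det)) :=
    ((Continuous.matrix_det continuous_id).tendsto _).comp (Umat_tendsto hq1 hd y)
  rw [Matrix.det_one] at hcont
  rw [← hdet] at hcont
  exact tendsto_nhds_unique tendsto_const_nhds hcont

lemma detW_eq_one (hq0 : q ≠ 0) (hq1 : ‖q‖ < 1) (hd : 2 ≤ d) (y : ℂ) :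
    (Wmat q α y d).det = 1 := by
  have hdet : (fun N : ℕ => (Wmat q α y d).det) =
      (fun N : ℕ => (Wmat q α (q ^ N * y) d).det) :=
    funext fun N => detW_pow hq0 hq1 hd y N
  have hcont : Tendsto (fun N : ℕ => (Wmat q α (q ^ N * y) d).det) atTop
      (nhds ((1 : Matrix (Fin d) (Fin d) ℂ).det)) :=
    ((Continuous.matrix_det continuous_id).tendsto _).comp (Wmat_tendsto hq0 hq1 hd y)
  rw [Matrix.det_one] at hcont
  rw [← hdet] at hcont
  exact tendsto_nhds_unique tendsto_const_nhds hcont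

end Det



section NN

variable {q α : ℂ} {d : ℕ}

/-- Entrywise 1-norm of a matrix. -/
def nn (A : Matrix (Fin d) (Fin d) ℂ) : ℝ := ∑ k : Fin d, ∑ l : Fin d, ‖A k l‖

lemma nn_nonneg (A : Matrix (Fin d) (Fin d) ℂ) : 0 ≤ nn A := by
  apply Finset.sum_nonneg
  intro k _
  apply Finset.sum_nonneg
  intro l _
  exact norm_nonneg _

lemma nn_add_le (A B : Matrix (Fin d) (Fin d) ℂ) : nn (A + B) ≤ nn A + nn B := by
  rw [nn, nn, nn, ← Finset.sum_add_distrib]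
  apply Finset.sum_le_sum
  intro k _
  rw [← Finset.sum_add_distrib]
  apply Finset.sum_le_sum
  intro l _
  exact norm_add_le _ _

lemma nn_smul (c : ℂ) (A : Matrix (Fin d) (Fin d) ℂ) : nn (c • A) = ‖c‖ * nn A := by
  simp only [nn, Matrix.smul_apply, smul_eq_mul, norm_mul, ← Finset.mul_sum]

lemma nn_neg (A : Matrix (Fin d) (Fin d) ℂ) : nn (-A) = nn A := by
  simp only [nn, Matrix.neg_apply, norm_neg]

lemma nn_entry_le {A : Matrix (Fin d) (Fin d) ℂ} {c : ℝ} (h : ∀ k l, ‖A k l‖ ≤ c) :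
    nn A ≤ (d : ℝ) * ((d : ℝ) * c) := by
  calc nn A ≤ ∑ k : Fin d, ∑ l : Fin d, c := by
        apply Finset.sum_le_sum
        intro k _
        exact Finset.sum_le_sum fun l _ => h k l
    _ = (d : ℝ) * ((d : ℝ) * c) := by
        simp [Finset.sum_const, Finset.card_univ, mul_assoc]

lemma nn_mul_le (A B : Matrix (Fin d) (Fin d) ℂ) : nn (A * B) ≤ nn A * nn B := by
  have rowB : ∀ j : Fin d, (∑ l : Fin d, ‖B j l‖) ≤ nn B := by
    intro j
    apply Finset.single_le_sum (f := fun j' => ∑ l : Fin d, ‖B j' l‖) ?_ (Finset.mem_univ j)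
    intro i _
    exact Finset.sum_nonneg fun l _ => norm_nonneg _
  calc nn (A * B) ≤ ∑ k : Fin d, ∑ l : Fin d, ∑ j : Fin d, ‖A k j‖ * ‖B j l‖ := by
        apply Finset.sum_le_sum
        intro k _
        apply Finset.sum_le_sum
        intro l _
        rw [Matrix.mul_apply]
        calc ‖∑ j : Fin d, A k j * B j l‖ ≤ ∑ j : Fin d, ‖A k j * B j l‖ :=
              norm_sum_le _ _
          _ = ∑ j : Fin d, ‖A k j‖ * ‖B j l‖ := by
              apply Finset.sum_congr rfl
              intro j _
              exact norm_mul _ _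
    _ = ∑ k : Fin d, ∑ j : Fin d, ‖A k j‖ * (∑ l : Fin d, ‖B j l‖) := by
        apply Finset.sum_congr rfl
        intro k _
        rw [Finset.sum_comm]
        apply Finset.sum_congr rfl
        intro j _
        rw [Finset.mul_sum]
    _ ≤ ∑ k : Fin d, ∑ j : Fin d, ‖A k j‖ * nn B := by
        apply Finset.sum_le_sum
        intro k _
        apply Finset.sum_le_sum
        intro j _
        exact mul_le_mul_of_nonneg_left (rowB j) (norm_nonneg _)
    _ = nn A * nn B := by
        simp only [nn, Finset.sum_mul]

lemma nn_eq_zero {A : Matrix (Fin d) (Fin d) ℂ} (h : nn A = 0) : A = 0 := by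
  ext k l
  have h1 : ∀ k' ∈ Finset.univ, (0:ℝ) ≤ ∑ l' : Fin d, ‖A k' l'‖ :=
    fun k' _ => Finset.sum_nonneg fun l' _ => norm_nonneg _
  have h2 := (Finset.sum_eq_zero_iff_of_nonneg h1).mp h k (Finset.mem_univ k)
  have h3 : ∀ l' ∈ Finset.univ, (0:ℝ) ≤ ‖A k l'‖ := fun l' _ => norm_nonneg _
  have h4 := (Finset.sum_eq_zero_iff_of_nonneg h3).mp h2 l (Finset.mem_univ l)
  simpa using norm_eq_zero.mp h4

end NN



section Product

open Filter

variable {q α : ℂ} {d : ℕ}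

/-- The deviation of `W·U` from its claimed value. -/
def Del (q α : ℂ) (d : ℕ) (hd : 2 ≤ d) (y' : ℂ) : Matrix (Fin d) (Fin d) ℂ :=
  Wmat q α y' d * Umat q α y' d - (1 - (α * y' / q) • Em d hd)

/-- Abstract solving lemma in a ring. -/
lemma solve_aux {R : Type*} [Ring R] (X Xi T Ti P G P' G' X' : R)
    (hXi : Xi * X = 1) (hTi : T * Ti = 1)
    (hP : X * P * T = T * P' * X') (hG : X * G * T = T * G' * X') :
    P - G = (Xi * T) * (P' - G') * (X' * Ti) := by
  have h1 : X * (P - G) * T = T * (P' - G') * X' := by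
    rw [mul_sub X P G, sub_mul, mul_sub T P' G', sub_mul, hP, hG]
  have h2 : Xi * (X * (P - G) * T) * Ti = P - G := by
    rw [← mul_assoc Xi (X * (P - G)) T, ← mul_assoc Xi X (P - G), hXi, one_mul,
      mul_assoc (P - G) T Ti, hTi, mul_one]
  rw [← h2, h1, ← mul_assoc Xi (T * (P' - G')) X', ← mul_assoc Xi T (P' - G'),
    mul_assoc (Xi * T * (P' - G')) X' Ti]

lemma expand_L {R : Type*} [Ring R] (S N' : R) :
    (1 - S) * (1 - N') - 1 = -N' + -S + S * N' := by noncomm_ring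

lemma expand_R {R : Type*} [Ring R] (S Ti : R) :
    (1 + S) * Ti - 1 = (Ti - 1) + S * Ti := by noncomm_ring

lemma expand_P {R : Type*} [Ring R] (W U S : R) :
    W * U - (1 - S) = (W - 1) * (U - 1) + (W - 1) + (U - 1) + S := by noncomm_ring

lemma expand_prod {R : Type*} [Ring R] (L X Rm : R) :
    L * X * Rm = X + (L - 1) * X + X * (Rm - 1) + (L - 1) * (X * (Rm - 1)) := by
  noncomm_ring

lemma Del_rec (hq0 : q ≠ 0) (hq1 : ‖q‖ < 1) (hd : 2 ≤ d) (y' : ℂ) :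
    Del q α d hd y' =
      ((1 - (α * y' / q) • Em d hd) * (1 - y' • Nl d)) * Del q α d hd (q * y') *
        ((1 + (α * y') • Em d hd) * Tinv d y') := by
  have ha' : α * (q * y') / q = α * y' := by
    rw [div_eq_iff hq0]; ring
  have hG : (1 + (α * y' / q) • Em d hd) * (1 - (α * y' / q) • Em d hd) *
      (1 - y' • Nl d) =
      (1 - y' • Nl d) * (1 - (α * (q * y') / q) • Em d hd) * (1 + (α * y') • Em d hd) := by
    rw [ha', one_add_Em_mul_one_sub_Em, one_mul, mul_assoc, one_sub_Em_mul_one_add_Em,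
      mul_one]
  have hR : (1 + (α * y' / q) • Em d hd) * (Wmat q α y' d * Umat q α y' d) *
      (1 - y' • Nl d) =
      (1 - y' • Nl d) * (Wmat q α (q * y') d * Umat q α (q * y') d) *
        (1 + (α * y') • Em d hd) := by
    rw [← mul_assoc (1 + (α * y' / q) • Em d hd) (Wmat q α y' d) (Umat q α y' d),
      mul_assoc ((1 + (α * y' / q) • Em d hd) * Wmat q α y' d) (Umat q α y' d)
        (1 - y' • Nl d),
      matB hq0 hq1 hd y', matA hq1 hd y',
      ← mul_assoc ((1 - y' • Nl d) * Wmat q α (q * y') d) (Umat q α (q * y') d) _,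
      mul_assoc (1 - y' • Nl d) (Wmat q α (q * y') d) (Umat q α (q * y') d)]
  have key := solve_aux (1 + (α * y' / q) • Em d hd) (1 - (α * y' / q) • Em d hd)
    (1 - y' • Nl d) (Tinv d y')
    (Wmat q α y' d * Umat q α y' d) (1 - (α * y' / q) • Em d hd)
    (Wmat q α (q * y') d * Umat q α (q * y') d) (1 - (α * (q * y') / q) • Em d hd)
    (1 + (α * y') • Em d hd)
    (one_sub_Em_mul_one_add_Em hd _) (T_mul_Tinv y') hR hG
  rw [Del, Del, key, ha']

/-- Constant for the left factor. -/
def cA (q α : ℂ) (d : ℕ) (hd : 2 ≤ d) (Yb : ℝ) : ℝ :=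
  nn (Nl d) + ‖α‖ / ‖q‖ * nn (Em d hd) + ‖α‖ / ‖q‖ * Yb * nn (Em d hd * Nl d)

/-- Constant for the right factor. -/
def cB (q α : ℂ) (d : ℕ) (hd : 2 ≤ d) (Yb : ℝ) : ℝ :=
  (d : ℝ) * ((d : ℝ) * Yb ^ d) + ‖α‖ * (nn (Em d hd) * ((d : ℝ) * ((d : ℝ) * Yb ^ d)))

lemma cA_nonneg (hd : 2 ≤ d) {Yb : ℝ} (hYb : 0 ≤ Yb) : 0 ≤ cA q α d hd Yb := by
  have h1 := nn_nonneg (Nl d)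
  have h2 := nn_nonneg (Em d hd)
  have h3 := nn_nonneg (Em d hd * Nl d)
  have h4 : (0:ℝ) ≤ ‖α‖ / ‖q‖ := by positivity
  rw [cA]
  positivity

lemma cB_nonneg (hd : 2 ≤ d) {Yb : ℝ} (hYb : 0 ≤ Yb) : 0 ≤ cB q α d hd Yb := by
  have h2 := nn_nonneg (Em d hd)
  rw [cB]
  positivity

lemma nn_L_bound (hq0 : q ≠ 0) (hd : 2 ≤ d) {Yb : ℝ} (hYb : 1 ≤ Yb) {y' : ℂ}
    (hy : ‖y'‖ ≤ Yb) :
    nn ((1 - (α * y' / q) • Em d hd) * (1 - y' • Nl d) - 1) ≤ cA q α d hd Yb * ‖y'‖ := by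
  have hq : (0:ℝ) < ‖q‖ := norm_pos_iff.mpr hq0
  have hx := expand_L ((α * y' / q) • Em d hd) (y' • Nl d)
  have hsm : ((α * y' / q) • Em d hd) * (y' • Nl d) =
      (α * y' / q * y') • (Em d hd * Nl d) := by
    rw [Matrix.smul_mul, Matrix.mul_smul, smul_smul]
  rw [hx, hsm]
  set D : ℝ := ‖α‖ / ‖q‖ with hD
  have hD0 : 0 ≤ D := by positivity
  have hna : ‖α * y' / q‖ = D * ‖y'‖ := by
    rw [norm_div, norm_mul, hD]; ring
  have hnay : ‖α * y' / q * y'‖ = D * ‖y'‖ * ‖y'‖ := by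
    rw [norm_mul, hna]
  have hstep : nn (-(y' • Nl d) + -((α * y' / q) • Em d hd) +
      (α * y' / q * y') • (Em d hd * Nl d)) ≤
      ‖y'‖ * nn (Nl d) + D * ‖y'‖ * nn (Em d hd) +
        D * ‖y'‖ * ‖y'‖ * nn (Em d hd * Nl d) := by
    have u1 := nn_add_le (-(y' • Nl d)) (-((α * y' / q) • Em d hd))
    have u2 := nn_add_le (-(y' • Nl d) + -((α * y' / q) • Em d hd))
      ((α * y' / q * y') • (Em d hd * Nl d))
    rw [nn_neg, nn_neg, nn_smul, nn_smul, hna] at u1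
    rw [nn_smul, hnay] at u2
    linarith
  refine hstep.trans ?_
  rw [cA, ← hD]
  have h1 := nn_nonneg (Nl d)
  have h2 := nn_nonneg (Em d hd)
  have h3 := nn_nonneg (Em d hd * Nl d)
  have h4 := norm_nonneg y'
  nlinarith [mul_le_mul_of_nonneg_left hy (mul_nonneg (mul_nonneg hD0 h4) h3)]

lemma nn_Tinv_sub_one (hd : 2 ≤ d) {Yb : ℝ} (hYb : 1 ≤ Yb) {y' : ℂ} (hy : ‖y'‖ ≤ Yb) :
    nn (Tinv d y' - 1) ≤ (d : ℝ) * ((d : ℝ) * (Yb ^ d * ‖y'‖)) := by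
  apply nn_entry_le
  intro k l
  rw [Matrix.sub_apply, Matrix.one_apply, Tinv, Matrix.of_apply]
  have hYb0 : (0:ℝ) ≤ Yb := by linarith
  rcases lt_trichotomy (k : ℕ) (l : ℕ) with h | h | h
  · rw [if_neg (by omega), if_neg (Fin.ne_of_val_ne (by omega)), sub_zero, norm_zero]
    positivity
  · rw [if_pos (by omega), if_pos (Fin.ext h), show (k : ℕ) - (l : ℕ) = 0 by omega,
      pow_zero, sub_self, norm_zero]
    positivity
  · rw [if_pos (by omega), if_neg (Fin.ne_of_val_ne (by omega)), sub_zero, norm_pow]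
    have hM : 1 ≤ (k : ℕ) - (l : ℕ) := by omega
    calc ‖y'‖ ^ ((k : ℕ) - (l : ℕ)) ≤ ‖y'‖ * Yb ^ ((k : ℕ) - (l : ℕ)) :=
          pow_peel (norm_nonneg _) hy hYb hM
      _ ≤ ‖y'‖ * Yb ^ d := by
          apply mul_le_mul_of_nonneg_left ?_ (norm_nonneg _)
          apply pow_le_pow_right₀ hYb
          have := k.isLt
          omega
      _ = Yb ^ d * ‖y'‖ := by ring

lemma nn_Tinv_le (hd : 2 ≤ d) {Yb : ℝ} (hYb : 1 ≤ Yb) {y' : ℂ} (hy : ‖y'‖ ≤ Yb) :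
    nn (Tinv d y') ≤ (d : ℝ) * ((d : ℝ) * Yb ^ d) := by
  apply nn_entry_le
  intro k l
  rw [Tinv, Matrix.of_apply]
  have hYb0 : (0:ℝ) ≤ Yb := by linarith
  by_cases h : (l : ℕ) ≤ (k : ℕ)
  · rw [if_pos h, norm_pow]
    calc ‖y'‖ ^ ((k : ℕ) - (l : ℕ)) ≤ Yb ^ ((k : ℕ) - (l : ℕ)) :=
          pow_le_pow_left₀ (norm_nonneg _) hy _
      _ ≤ Yb ^ d := by
          apply pow_le_pow_right₀ hYb
          have := k.isLt
          omega
  · rw [if_neg h, norm_zero]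
    positivity

lemma nn_R_bound (hd : 2 ≤ d) {Yb : ℝ} (hYb : 1 ≤ Yb) {y' : ℂ} (hy : ‖y'‖ ≤ Yb) :
    nn ((1 + (α * y') • Em d hd) * Tinv d y' - 1) ≤ cB q α d hd Yb * ‖y'‖ := by
  have hx := expand_R ((α * y') • Em d hd) (Tinv d y')
  have hsm : ((α * y') • Em d hd) * Tinv d y' = (α * y') • (Em d hd * Tinv d y') :=
    Matrix.smul_mul _ _ _
  rw [hx, hsm]
  have h1 := nn_Tinv_sub_one (hd := hd) hYb hy
  have h2 : nn ((α * y') • (Em d hd * Tinv d y')) ≤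
      ‖α‖ * (nn (Em d hd) * ((d : ℝ) * ((d : ℝ) * Yb ^ d))) * ‖y'‖ := by
    rw [nn_smul, norm_mul]
    have h3 := nn_mul_le (Em d hd) (Tinv d y')
    have h4 := nn_Tinv_le (hd := hd) hYb hy
    have h5 := nn_nonneg (Em d hd)
    have h6 := nn_nonneg (Tinv d y')
    have h7 := nn_nonneg (Em d hd * Tinv d y')
    have h8 := norm_nonneg α
    have h9 := norm_nonneg y'
    nlinarith [mul_le_mul_of_nonneg_left
      (h3.trans (mul_le_mul_of_nonneg_left h4 h5)) (mul_nonneg h8 h9)]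
  calc nn ((Tinv d y' - 1) + (α * y') • (Em d hd * Tinv d y'))
      ≤ nn (Tinv d y' - 1) + nn ((α * y') • (Em d hd * Tinv d y')) := nn_add_le _ _
    _ ≤ (d : ℝ) * ((d : ℝ) * (Yb ^ d * ‖y'‖)) +
          ‖α‖ * (nn (Em d hd) * ((d : ℝ) * ((d : ℝ) * Yb ^ d))) * ‖y'‖ := by linarith
    _ = cB q α d hd Yb * ‖y'‖ := by rw [cB]; ring

lemma Del_step_bound (hq0 : q ≠ 0) (hq1 : ‖q‖ < 1) (hd : 2 ≤ d) {Yb : ℝ}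
    (hYb : 1 ≤ Yb) {y' : ℂ} (hy : ‖y'‖ ≤ Yb) :
    nn (Del q α d hd y') ≤
      (1 + cA q α d hd Yb * ‖y'‖) * nn (Del q α d hd (q * y')) *
        (1 + cB q α d hd Yb * ‖y'‖) := by
  rw [Del_rec hq0 hq1 hd y', expand_prod]
  have hA := nn_L_bound (α := α) hq0 hd hYb hy
  have hB := nn_R_bound (q := q) (α := α) hd hYb hy
  set L : Matrix (Fin d) (Fin d) ℂ :=
    (1 - (α * y' / q) • Em d hd) * (1 - y' • Nl d) with hL
  set R : Matrix (Fin d) (Fin d) ℂ := (1 + (α * y') • Em d hd) * Tinv d y' with hR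
  set X : Matrix (Fin d) (Fin d) ℂ := Del q α d hd (q * y') with hX
  have n1 := nn_nonneg X
  have n2 := nn_nonneg (L - 1)
  have m1 := nn_mul_le (L - 1) X
  have m2 := nn_mul_le X (R - 1)
  have m3 := nn_mul_le (L - 1) (X * (R - 1))
  have t2 := nn_add_le X ((L - 1) * X)
  have t1 := nn_add_le (X + (L - 1) * X) (X * (R - 1))
  have t3 := nn_add_le (X + (L - 1) * X + X * (R - 1)) ((L - 1) * (X * (R - 1)))
  have h1 : nn (L - 1) * nn X ≤ cA q α d hd Yb * ‖y'‖ * nn X :=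
    mul_le_mul_of_nonneg_right hA n1
  have h2 : nn X * nn (R - 1) ≤ nn X * (cB q α d hd Yb * ‖y'‖) :=
    mul_le_mul_of_nonneg_left hB n1
  have h3 : nn (L - 1) * nn (X * (R - 1)) ≤
      cA q α d hd Yb * ‖y'‖ * (nn X * (cB q α d hd Yb * ‖y'‖)) :=
    mul_le_mul hA (m2.trans h2) (nn_nonneg _) (n2.trans hA)
  have expand : (1 + cA q α d hd Yb * ‖y'‖) * nn X * (1 + cB q α d hd Yb * ‖y'‖) =
      nn X + cA q α d hd Yb * ‖y'‖ * nn X + nn X * (cB q α d hd Yb * ‖y'‖) +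
        cA q α d hd Yb * ‖y'‖ * (nn X * (cB q α d hd Yb * ‖y'‖)) := by ring
  rw [expand]
  linarith

end Product



section Final

open Filter

variable {q α : ℂ} {d : ℕ}

/-- Sum of all entry tail constants for `U`. -/
def CUc (q α : ℂ) (d : ℕ) (Yb : ℝ) : ℝ :=
  ∑ k : Fin d, ∑ l : Fin d,
    ∑' n : ℕ, mU q α d Yb (k : ℕ) (l : ℕ) (n + (if (k : ℕ) ≤ (l : ℕ) then 1 else 0))

/-- Sum of all entry tail constants for `W`. -/
def CWc (q α : ℂ) (d : ℕ) (Yb : ℝ) : ℝ :=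
  ∑ k : Fin d, ∑ l : Fin d,
    ∑' n : ℕ, mW q α d Yb (k : ℕ) (l : ℕ) (n + (if (k : ℕ) ≤ (l : ℕ) then 1 else 0))

lemma CUc_nonneg (hq1 : ‖q‖ < 1) {Yb : ℝ} (hYb : 0 ≤ Yb) : 0 ≤ CUc q α d Yb := by
  apply Finset.sum_nonneg
  intro k _
  apply Finset.sum_nonneg
  intro l _
  exact tsum_nonneg fun n => mU_nonneg hq1 hYb _ _ _

lemma CWc_nonneg (hq1 : ‖q‖ < 1) {Yb : ℝ} (hYb : 0 ≤ Yb) : 0 ≤ CWc q α d Yb := by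
  apply Finset.sum_nonneg
  intro k _
  apply Finset.sum_nonneg
  intro l _
  exact tsum_nonneg fun n => mW_nonneg hq1 hYb _ _ _

lemma nn_U_sub_one (hq1 : ‖q‖ < 1) (hd : 2 ≤ d) {Yb : ℝ} (hYb : 1 ≤ Yb) {y' : ℂ}
    (hy : ‖y'‖ ≤ Yb) :
    nn (Umat q α y' d - 1) ≤ CUc q α d Yb * ‖y'‖ := by
  rw [nn, CUc, Finset.sum_mul]
  apply Finset.sum_le_sum
  intro k _
  rw [Finset.sum_mul]
  apply Finset.sum_le_sum
  intro l _
  rw [Matrix.sub_apply, Matrix.one_apply, Umat_apply']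
  have hiff : (k = l) ↔ ((k : ℕ) = (l : ℕ)) := ⟨fun h' => by rw [h'], Fin.ext⟩
  rw [if_congr hiff rfl rfl]
  exact Ue_delta_bound (α := α) hq1 hd k.isLt l.isLt hYb hy

lemma nn_W_sub_one (hq0 : q ≠ 0) (hq1 : ‖q‖ < 1) (hd : 2 ≤ d) {Yb : ℝ} (hYb : 1 ≤ Yb)
    {y' : ℂ} (hy : ‖y'‖ ≤ Yb) :
    nn (Wmat q α y' d - 1) ≤ CWc q α d Yb * ‖y'‖ := by
  rw [nn, CWc, Finset.sum_mul]
  apply Finset.sum_le_sum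
  intro k _
  rw [Finset.sum_mul]
  apply Finset.sum_le_sum
  intro l _
  rw [Matrix.sub_apply, Matrix.one_apply, Wmat_apply']
  have hiff : (k = l) ↔ ((k : ℕ) = (l : ℕ)) := ⟨fun h' => by rw [h'], Fin.ext⟩
  rw [if_congr hiff rfl rfl]
  exact We_delta_bound (α := α) hq0 hq1 hd k.isLt l.isLt hYb hy

/-- Master constant for the smallness of `Del`. -/
def CDel (q α : ℂ) (d : ℕ) (hd : 2 ≤ d) (Yb : ℝ) : ℝ :=
  CWc q α d Yb * Yb * CUc q α d Yb + CWc q α d Yb + CUc q α d Yb +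
    ‖α‖ / ‖q‖ * nn (Em d hd)

lemma Del_small (hq0 : q ≠ 0) (hq1 : ‖q‖ < 1) (hd : 2 ≤ d) {Yb : ℝ} (hYb : 1 ≤ Yb)
    {y' : ℂ} (hy : ‖y'‖ ≤ Yb) :
    nn (Del q α d hd y') ≤ CDel q α d hd Yb * ‖y'‖ := by
  have hYb0 : (0:ℝ) ≤ Yb := by linarith
  rw [Del, expand_P]
  set A : Matrix (Fin d) (Fin d) ℂ := Wmat q α y' d - 1 with hA
  set B : Matrix (Fin d) (Fin d) ℂ := Umat q α y' d - 1 with hB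
  set S : Matrix (Fin d) (Fin d) ℂ := (α * y' / q) • Em d hd with hS
  have hU := nn_U_sub_one (α := α) hq1 hd hYb hy
  have hW := nn_W_sub_one (α := α) hq0 hq1 hd hYb hy
  rw [← hB] at hU
  rw [← hA] at hW
  have hCU := CUc_nonneg (q := q) (α := α) (d := d) hq1 hYb0
  have hCW := CWc_nonneg (q := q) (α := α) (d := d) hq1 hYb0
  have hSb : nn S = ‖α‖ / ‖q‖ * nn (Em d hd) * ‖y'‖ := by
    rw [hS, nn_smul, norm_div, norm_mul]
    ring
  have t1 := nn_add_le (A * B) A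
  have t2 := nn_add_le (A * B + A) B
  have t3 := nn_add_le (A * B + A + B) S
  have m := nn_mul_le A B
  have h6 : nn A * nn B ≤ CWc q α d Yb * ‖y'‖ * (CUc q α d Yb * ‖y'‖) :=
    mul_le_mul hW hU (nn_nonneg _) (le_trans (nn_nonneg _) hW)
  have h7 : CWc q α d Yb * ‖y'‖ * (CUc q α d Yb * ‖y'‖) ≤
      CWc q α d Yb * Yb * CUc q α d Yb * ‖y'‖ := by
    nlinarith [norm_nonneg y', mul_nonneg (mul_nonneg hCW (norm_nonneg y')) hCU]
  have expand : CDel q α d hd Yb * ‖y'‖ =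
      CWc q α d Yb * Yb * CUc q α d Yb * ‖y'‖ + CWc q α d Yb * ‖y'‖ +
        CUc q α d Yb * ‖y'‖ + ‖α‖ / ‖q‖ * nn (Em d hd) * ‖y'‖ := by
    rw [CDel]; ring
  rw [expand]
  linarith

lemma Del_zero (hq0 : q ≠ 0) (hq1 : ‖q‖ < 1) (hd : 2 ≤ d) (y : ℂ) :
    Del q α d hd y = 0 := by
  set Yb : ℝ := max ‖y‖ 1 with hYb'
  have hYb : (1:ℝ) ≤ Yb := le_max_right _ _
  have hYb0 : (0:ℝ) ≤ Yb := by linarith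
  set c1 := cA q α d hd Yb with hc1'
  set c2 := cB q α d hd Yb with hc2'
  have hc1 : 0 ≤ c1 := cA_nonneg hd hYb0
  have hc2 : 0 ≤ c2 := cB_nonneg hd hYb0
  have key : ∀ N : ℕ, nn (Del q α d hd y) ≤
      (∏ j ∈ Finset.range N, ((1 + c1 * ‖q ^ j * y‖) * (1 + c2 * ‖q ^ j * y‖))) *
        nn (Del q α d hd (q ^ N * y)) := by
    intro N
    induction N with
    | zero => simp
    | succ n ih =>
      have hstep := Del_step_bound (α := α) hq0 hq1 hd hYb (norm_qpow_mul_le hq1 y n)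
      rw [show q * (q ^ n * y) = q ^ (n + 1) * y by ring] at hstep
      have hprodnn : (0:ℝ) ≤
          ∏ j ∈ Finset.range n, ((1 + c1 * ‖q ^ j * y‖) * (1 + c2 * ‖q ^ j * y‖)) := by
        apply Finset.prod_nonneg
        intro j _
        have h0 := norm_nonneg (q ^ j * y)
        positivity
      calc nn (Del q α d hd y) ≤
            (∏ j ∈ Finset.range n, ((1 + c1 * ‖q ^ j * y‖) * (1 + c2 * ‖q ^ j * y‖))) *
              nn (Del q α d hd (q ^ n * y)) := ih
        _ ≤ (∏ j ∈ Finset.range n, ((1 + c1 * ‖q ^ j * y‖) * (1 + c2 * ‖q ^ j * y‖))) *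
              ((1 + c1 * ‖q ^ n * y‖) * nn (Del q α d hd (q ^ (n + 1) * y)) *
                (1 + c2 * ‖q ^ n * y‖)) := mul_le_mul_of_nonneg_left hstep hprodnn
        _ = (∏ j ∈ Finset.range (n + 1),
              ((1 + c1 * ‖q ^ j * y‖) * (1 + c2 * ‖q ^ j * y‖))) *
              nn (Del q α d hd (q ^ (n + 1) * y)) := by
            rw [Finset.prod_range_succ]; ring
  set K : ℝ := Real.exp ((c1 + c2) * (‖y‖ * (1 - ‖q‖)⁻¹)) with hK'
  have hK0 : (0:ℝ) ≤ K := by rw [hK']; exact (Real.exp_pos _).le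
  have hq' : (0:ℝ) < 1 - ‖q‖ := by linarith [norm_nonneg q]
  have hprodK : ∀ N : ℕ,
      (∏ j ∈ Finset.range N, ((1 + c1 * ‖q ^ j * y‖) * (1 + c2 * ‖q ^ j * y‖))) ≤ K := by
    intro N
    have step1 : ∀ j ∈ Finset.range N,
        (1 + c1 * ‖q ^ j * y‖) * (1 + c2 * ‖q ^ j * y‖) ≤
          Real.exp ((c1 + c2) * ‖q ^ j * y‖) := by
      intro j _
      have hr := norm_nonneg (q ^ j * y)
      have e1 : 1 + c1 * ‖q ^ j * y‖ ≤ Real.exp (c1 * ‖q ^ j * y‖) := by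
        have := Real.add_one_le_exp (c1 * ‖q ^ j * y‖); linarith
      have e2 : 1 + c2 * ‖q ^ j * y‖ ≤ Real.exp (c2 * ‖q ^ j * y‖) := by
        have := Real.add_one_le_exp (c2 * ‖q ^ j * y‖); linarith
      calc (1 + c1 * ‖q ^ j * y‖) * (1 + c2 * ‖q ^ j * y‖) ≤
            Real.exp (c1 * ‖q ^ j * y‖) * Real.exp (c2 * ‖q ^ j * y‖) :=
          mul_le_mul e1 e2 (by positivity) (Real.exp_pos _).le
        _ = Real.exp ((c1 + c2) * ‖q ^ j * y‖) := by
            rw [← Real.exp_add]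
            congr 1
            ring
    calc (∏ j ∈ Finset.range N, ((1 + c1 * ‖q ^ j * y‖) * (1 + c2 * ‖q ^ j * y‖)))
        ≤ ∏ j ∈ Finset.range N, Real.exp ((c1 + c2) * ‖q ^ j * y‖) := by
          apply Finset.prod_le_prod ?_ step1
          intro j _
          have h0 := norm_nonneg (q ^ j * y)
          positivity
      _ = Real.exp (∑ j ∈ Finset.range N, (c1 + c2) * ‖q ^ j * y‖) :=
          (Real.exp_sum _ _).symm
      _ ≤ K := by
          rw [hK']
          apply Real.exp_le_exp.mpr
          have hsum : ∑ j ∈ Finset.range N, (c1 + c2) * ‖q ^ j * y‖ =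
              (c1 + c2) * ∑ j ∈ Finset.range N, ‖q‖ ^ j * ‖y‖ := by
            rw [Finset.mul_sum]
            apply Finset.sum_congr rfl
            intro j _
            rw [norm_mul, norm_pow]
          rw [hsum]
          apply mul_le_mul_of_nonneg_left ?_ (by linarith)
          rw [← Finset.sum_mul]
          have h2 : (∑ j ∈ Finset.range N, ‖q‖ ^ j) ≤ (1 - ‖q‖)⁻¹ := by
            have h3 := Summable.sum_le_tsum (Finset.range N)
              (fun i _ => by positivity)
              (summable_geometric_of_lt_one (norm_nonneg q) hq1)
            rw [tsum_geometric_of_lt_one (norm_nonneg q) hq1] at h3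
            exact h3
          calc (∑ j ∈ Finset.range N, ‖q‖ ^ j) * ‖y‖ ≤ (1 - ‖q‖)⁻¹ * ‖y‖ :=
                mul_le_mul_of_nonneg_right h2 (norm_nonneg y)
            _ = ‖y‖ * (1 - ‖q‖)⁻¹ := by ring
  have hlim : Tendsto (fun N : ℕ => K * (CDel q α d hd Yb * ‖q ^ N * y‖)) atTop
      (nhds 0) := by
    have h := norm_qpow_mul_tendsto hq1 y (K * CDel q α d hd Yb)
    convert h using 2 with N
    ring
  have hle : ∀ N : ℕ, nn (Del q α d hd y) ≤ K * (CDel q α d hd Yb * ‖q ^ N * y‖) := by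
    intro N
    have h1 := Del_small (α := α) hq0 hq1 hd hYb (norm_qpow_mul_le hq1 y N)
    calc nn (Del q α d hd y) ≤
          (∏ j ∈ Finset.range N, ((1 + c1 * ‖q ^ j * y‖) * (1 + c2 * ‖q ^ j * y‖))) *
            nn (Del q α d hd (q ^ N * y)) := key N
      _ ≤ K * (CDel q α d hd Yb * ‖q ^ N * y‖) :=
          mul_le_mul (hprodK N) h1 (nn_nonneg _) hK0
  have hfinal : nn (Del q α d hd y) ≤ 0 :=
    le_of_tendsto_of_tendsto' tendsto_const_nhds hlim hle
  exact nn_eq_zero (le_antisymm hfinal (nn_nonneg _))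

lemma WU_eq (hq0 : q ≠ 0) (hq1 : ‖q‖ < 1) (hd : 2 ≤ d) (y : ℂ) :
    Wmat q α y d * Umat q α y d = 1 - (α * y / q) • Em d hd := by
  have h := Del_zero (α := α) hq0 hq1 hd y
  rw [Del, sub_eq_zero] at h
  exact h

end Final


end CB

/-- Change-of-basis identities (Theorem 5.12). -/
theorem change_of_basis (q α y : ℂ) (hq0 : 0 < ‖q‖)
    (hq1 : ‖q‖ < 1) (hα : α ≠ 0) (d : ℕ) (hd : 2 ≤ d) :
    (Umat q α y d).det = 1 ∧ (Wmat q α y d).det = 1 ∧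
    Wmat q α y d * Umat q α y d =
      1 + Matrix.single (⟨0, by omega⟩ : Fin d) (⟨d - 1, by omega⟩ : Fin d)
        (-α * y / q) := by
  have hq0' : q ≠ 0 := by
    intro h
    rw [h] at hq0
    simp at hq0
  have hq1' : ‖q‖ < 1 := hq1
  refine ⟨CB.detU_eq_one hq1' hd y, CB.detW_eq_one hq0' hq1' hd y, ?_⟩
  rw [CB.WU_eq hq0' hq1' hd y, sub_eq_add_neg, ← neg_smul]
  simp only [CB.Em, Matrix.smul_single, smul_eq_mul, mul_one]
  have hs : -(α * y / q) = -α * y / q := by ring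
  rw [hs]

end
end
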